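/- arXiv:2506.10538 — 10 statements merged into one kernel-verified Lean document; each statement's English description precedes it below -/
import Mathlib

section
/- Pointwise maximum principle at a strict one-sided maximum (Proposition 2.4, subharmonic branch). Let q ≥ 0 and c ∈ ℝ. Let f : ℝ → ℝ be Borel measurable, differentiable on a neighborhood of c with f′ differentiable at c, and suppose that y ↦ f(c+y) − f(c) is Π-integrable on (−∞,0). If f(c) ≥ 0, f′(c) = 0, and f(c) > f(x) for every x < c, then ℒf(c) − q·f(c) < 0. -/
open MeasureTheory Set Filter Topology

/-- Generator of a spectrally negative Lévy process with drift `δ`,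
Gaussian coefficient `σ` and Lévy measure `ν` concentrated on `(-∞,0)`:
`ℒf(x) = δ f'(x) + (σ²/2) f''(x) + ∫_{(-∞,0)} (f(x+y) - f(x)) ν(dy)`. -/
noncomputable def gen (δ σ : ℝ) (ν : Measure ℝ) (f : ℝ → ℝ) (x : ℝ) : ℝ :=
  δ * deriv f x + σ ^ 2 / 2 * deriv (deriv f) x +
    ∫ y in Iio (0 : ℝ), (f (x + y) - f x) ∂ν

/-- Pointwise maximum principle at a strict one-sided maximum
(Proposition 2.4, subharmonic branch). -/
theorem stmt0
    (δ σ : ℝ) (hσ : 0 ≤ σ)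
    (ν : Measure ℝ) (hν0 : ν ≠ 0) (hνsupp : ν (Ici (0 : ℝ)) = 0)
    (hνint : IntegrableOn (fun y => min 1 |y|) (Iio (0 : ℝ)) ν)
    (q : ℝ) (hq : 0 ≤ q) (c : ℝ) (f : ℝ → ℝ)
    (hmeas : Measurable f)
    (hdiff : ∀ᶠ x in 𝓝 c, DifferentiableAt ℝ f x)
    (hdiff' : DifferentiableAt ℝ (deriv f) c)
    (hint : IntegrableOn (fun y => f (c + y) - f c) (Iio (0 : ℝ)) ν)
    (h0 : 0 ≤ f c) (h1 : deriv f c = 0) (h2 : ∀ x < c, f x < f c) :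
    gen δ σ ν f c - q * f c < 0 := by
  
  -- second derivative nonpositive
  have hL : deriv (deriv f) c ≤ 0 := by
    by_contra hcon
    push_neg at hcon
    have h := hdiff'.hasDerivAt
    rw [hasDerivAt_iff_tendsto_slope] at h
    have hpos : ∀ᶠ x in 𝓝[≠] c, 0 < slope (deriv f) c x :=
      h.eventually (eventually_gt_nhds hcon)
    have hmono : 𝓝[<] c ≤ 𝓝[≠] c := nhdsWithin_mono _ (fun x hx => ne_of_lt hx)
    have hneg : ∀ᶠ x in 𝓝[<] c, deriv f x < 0 := by
      filter_upwards [hpos.filter_mono hmono, self_mem_nhdsWithin] with x hx hx'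
      rw [slope_def_field, div_pos_iff] at hx
      rcases hx with ⟨h1', h2'⟩ | ⟨h1', h2'⟩
      · have hxc : x < c := hx'; linarith
      · simpa [h1] using h1'
    have hd : ∀ᶠ x in 𝓝[<] c, DifferentiableAt ℝ f x :=
      nhdsWithin_le_nhds hdiff
    obtain ⟨a, ha, hsub⟩ := mem_nhdsLT_iff_exists_Ioo_subset.mp (hneg.and hd)
    set b := (a + c) / 2 with hb
    have hbc : b < c := by simp [hb]; linarith [ha.out]
    have hab : a < b := by simp [hb]; linarith [ha.out]
    have hdiffIcc : ∀ x ∈ Icc b c, DifferentiableAt ℝ f x := by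
      intro x hx
      rcases eq_or_lt_of_le hx.2 with rfl | hlt
      · exact hdiff.self_of_nhds
      · exact (hsub ⟨lt_of_lt_of_le hab hx.1, hlt⟩).2
    obtain ⟨ξ, hξ, hξd⟩ := exists_hasDerivAt_eq_slope f (deriv f) hbc
      (fun x hx => (hdiffIcc x hx).continuousAt.continuousWithinAt)
      (fun x hx => (hdiffIcc x ⟨le_of_lt hx.1, le_of_lt hx.2⟩).hasDerivAt)
    have hξneg : deriv f ξ < 0 := (hsub ⟨lt_trans hab hξ.1, hξ.2⟩).1
    rw [hξd] at hξneg
    have : f c - f b < 0 := by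
      have := div_neg_iff.mp hξneg
      rcases this with ⟨h1', h2'⟩ | ⟨h1', h2'⟩
      · linarith
      · linarith
    linarith [h2 b hbc]
  -- integral strictly negative
  have hIio : 0 < ν (Iio (0 : ℝ)) := by
    by_contra hcon
    push_neg at hcon
    have h0' : ν (Iio (0 : ℝ)) = 0 := le_antisymm hcon bot_le
    have : ν univ = 0 := by
      have := measure_union_le (μ := ν) (Iio (0:ℝ)) (Ici 0)
      rw [Iio_union_Ici, h0', hνsupp] at this
      simpa using this
    exact hν0 (Measure.measure_univ_eq_zero.mp this)
  have hIneg : ∫ y in Iio (0 : ℝ), (f (c + y) - f c) ∂ν < 0 := by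
    have hkey : 0 < ∫ y in Iio (0 : ℝ), (f c - f (c + y)) ∂ν := by
      rw [setIntegral_pos_iff_support_of_nonneg_ae]
      · refine lt_of_lt_of_le hIio (measure_mono ?_)
        intro y hy
        constructor
        · simp only [Function.mem_support]
          have : f (c + y) < f c := h2 _ (by linarith [hy.out])
          intro h; rw [sub_eq_zero] at h; linarith
        · exact hy
      · refine (ae_restrict_iff' measurableSet_Iio).mpr (ae_of_all _ ?_)
        intro y hy
        have : f (c + y) < f c := h2 _ (by linarith [hy.out])
        simp; linarith
      · exact hint.neg.congr (Filter.Eventually.of_forall fun y => by simp [neg_sub])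
    have : ∫ y in Iio (0 : ℝ), (f c - f (c + y)) ∂ν
        = - ∫ y in Iio (0 : ℝ), (f (c + y) - f c) ∂ν := by
      rw [← integral_neg]; congr 1; ext y; ring
    linarith [this ▸ hkey]
  have hσ2 : σ ^ 2 / 2 * deriv (deriv f) c ≤ 0 :=
    mul_nonpos_of_nonneg_of_nonpos (by positivity) hL
  have hqf : 0 ≤ q * f c := mul_nonneg hq h0
  simp only [gen, h1, mul_zero, zero_add]
  linarith
end

section
/- Pointwise minimum principle at a strict one-sided minimum (Proposition 2.4, superharmonic branch). Let q ≥ 0 and c ∈ ℝ. Let f : ℝ → ℝ be Borel measurable, differentiable on a neighborhood of c with f′ differentiable at c, and suppose that y ↦ f(c+y) − f(c) is Π-integrable on (−∞,0). If f(c) ≤ 0, f′(c) = 0, and f(c) < f(x) for every x < c, then ℒf(c) − q·f(c) > 0. -/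
open MeasureTheory Set Filter Topology

/-- Pointwise minimum principle at a strict one-sided minimum
(Proposition 2.4, superharmonic branch). -/
theorem stmt1
    (δ σ : ℝ) (hσ : 0 ≤ σ)
    (ν : Measure ℝ) (hν0 : ν ≠ 0) (hνsupp : ν (Ici (0 : ℝ)) = 0)
    (hνint : IntegrableOn (fun y => min 1 |y|) (Iio (0 : ℝ)) ν)
    (q : ℝ) (hq : 0 ≤ q) (c : ℝ) (f : ℝ → ℝ)
    (hmeas : Measurable f)
    (hdiff : ∀ᶠ x in 𝓝 c, DifferentiableAt ℝ f x)
    (hdiff' : DifferentiableAt ℝ (deriv f) c)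
    (hint : IntegrableOn (fun y => f (c + y) - f c) (Iio (0 : ℝ)) ν)
    (h0 : f c ≤ 0) (h1 : deriv f c = 0) (h2 : ∀ x < c, f c < f x) :
    0 < gen δ σ ν f c - q * f c := by
  -- ν (Iio 0) > 0
  have hν_pos : 0 < ν (Iio (0 : ℝ)) := by
    rcases eq_or_lt_of_le (zero_le : 0 ≤ ν (Iio (0:ℝ))) with h | h
    · exfalso
      apply hν0
      refine Measure.measure_univ_eq_zero.mp ?_
      have : (univ : Set ℝ) = Iio 0 ∪ Ici 0 := (Iio_union_Ici).symm
      rw [this]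
      refine le_antisymm ?_ zero_le
      calc ν (Iio 0 ∪ Ici 0) ≤ ν (Iio 0) + ν (Ici 0) := measure_union_le _ _
        _ = 0 := by rw [← h, hνsupp]; simp
    · exact h
  -- the integral is positive
  have hI : 0 < ∫ y in Iio (0 : ℝ), (f (c + y) - f c) ∂ν := by
    have hnn : 0 ≤ᵐ[ν.restrict (Iio (0:ℝ))] fun y => f (c + y) - f c := by
      refine (ae_restrict_iff' measurableSet_Iio).mpr (ae_of_all _ fun y hy => ?_)
      have : c + y < c := by linarith [mem_Iio.mp hy]
      have := h2 _ this
      simp only [Pi.zero_apply]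
      linarith
    rw [setIntegral_pos_iff_support_of_nonneg_ae hnn hint]
    have hset : (Function.support fun y => f (c + y) - f c) ∩ Iio (0:ℝ) = Iio 0 := by
      ext y
      simp only [mem_inter_iff, Function.mem_support, mem_Iio]
      constructor
      · rintro ⟨_, hy⟩; exact hy
      · intro hy
        refine ⟨?_, hy⟩
        have : c + y < c := by linarith
        have := h2 _ this
        intro h; rw [sub_eq_zero] at h; linarith
    rw [hset]
    exact hν_pos
  -- second derivative nonneg
  have hdd : 0 ≤ deriv (deriv f) c := by
    by_contra hneg
    push_neg at hneg
    -- slope of deriv f tends to deriv (deriv f) c < 0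
    have hslope : Tendsto (slope (deriv f) c) (𝓝[≠] c) (𝓝 (deriv (deriv f) c)) :=
      hasDerivAt_iff_tendsto_slope.mp hdiff'.hasDerivAt
    have hslope' : Tendsto (slope (deriv f) c) (𝓝[<] c) (𝓝 (deriv (deriv f) c)) :=
      hslope.mono_left (nhdsWithin_mono _ fun x hx => ne_of_lt hx)
    have hev : ∀ᶠ x in 𝓝[<] c, slope (deriv f) c x < 0 :=
      hslope'.eventually (gt_mem_nhds hneg)
    have hev2 : ∀ᶠ x in 𝓝[<] c, DifferentiableAt ℝ f x :=
      hdiff.filter_mono nhdsWithin_le_nhds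
    have hev3 : ∀ᶠ x in 𝓝[<] c, 0 < deriv f x ∧ DifferentiableAt ℝ f x := by
      filter_upwards [hev, hev2, self_mem_nhdsWithin] with x hx hx2 hx3
      refine ⟨?_, hx2⟩
      have hxc : x - c < 0 := by simpa [sub_neg] using (mem_Iio.mp hx3)
      have : deriv f x = slope (deriv f) c x * (x - c) := by
        rw [slope_def_field, h1, sub_zero,
          div_mul_cancel₀ _ (sub_ne_zero.mpr (ne_of_lt (mem_Iio.mp hx3)))]
      rw [this]
      exact mul_pos_of_neg_of_neg hx hxc
    rcases mem_nhdsLT_iff_exists_Ioo_subset.mp hev3 with ⟨a, ha, hsub⟩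
    set a' : ℝ := (a + c) / 2 with ha'def
    have haa' : a < a' := by simp only [ha'def]; have := mem_Iio.mp ha; linarith [mem_Iio.mp ha]
    have ha'c : a' < c := by simp only [ha'def]; linarith [mem_Iio.mp ha]
    have hdiffIcc : ∀ x ∈ Icc a' c, DifferentiableAt ℝ f x := by
      intro x hx
      rcases eq_or_lt_of_le hx.2 with h | h
      · rw [h]; exact hdiff.self_of_nhds
      · exact (hsub ⟨lt_of_lt_of_le haa' hx.1, h⟩).2
    have hmono : StrictMonoOn f (Icc a' c) := by
      refine strictMonoOn_of_deriv_pos (convex_Icc a' c)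
        (fun x hx => (hdiffIcc x hx).continuousAt.continuousWithinAt) (fun x hx => ?_)
      rw [interior_Icc] at hx
      exact (hsub ⟨lt_trans haa' hx.1, hx.2⟩).1
    have : f a' < f c := hmono (left_mem_Icc.mpr (le_of_lt ha'c))
      (right_mem_Icc.mpr (le_of_lt ha'c)) ha'c
    linarith [h2 a' ha'c]
  unfold gen
  rw [h1]
  have hσ2 : 0 ≤ σ ^ 2 / 2 * deriv (deriv f) c :=
    mul_nonneg (by positivity) hdd
  nlinarith [mul_nonneg hq (neg_nonneg.mpr h0)]
end

section
/- Maximum principle for q-subharmonic functions (Proposition 2.5, case q > 0). Let q > 0 and a < b. Let f : ℝ → ℝ be nonnegative, Borel measurable, continuous on (−∞,b], differentiable on a neighborhood of every point of (a,b) with f′ differentiable at every point of (a,b), and with y ↦ f(x+y) − f(x) Π-integrable for every x ∈ (a,b). Assume ℒf(x) − q·f(x) ≥ 0 for all x ∈ (a,b). If there exists c ∈ (a,b) such that f(c) ≥ f(x) for all x ∈ (−∞,b), then f vanishes identically on (−∞,b]. In particular, a non-constant nonnegative function that is q-subharmonic on (a,b) in this sense cannot attain the maximum of its restriction to (−∞,b)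 at any point of (a,b). -/
open MeasureTheory Set Filter Topology

/-- Maximum principle for `q`-subharmonic functions (Proposition 2.5, case `q > 0`):
a nonnegative function that is `q`-subharmonic on `(a,b)`, continuous on `(-∞,b]`,
and attains at some interior point of `(a,b)` the maximum of its restriction to
`(-∞,b)`, must vanish identically on `(-∞,b]`. -/
theorem stmt2
    (δ σ : ℝ) (hσ : 0 ≤ σ)
    (ν : Measure ℝ) (hν0 : ν ≠ 0) (hνsupp : ν (Ici (0 : ℝ)) = 0)
    (hνint : IntegrableOn (fun y => min 1 |y|) (Iio (0 : ℝ)) ν)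
    (q : ℝ) (hq : 0 < q) (a b : ℝ) (hab : a < b) (f : ℝ → ℝ)
    (hnn : ∀ x, 0 ≤ f x)
    (hmeas : Measurable f)
    (hcont : ContinuousOn f (Iic b))
    (hdiff : ∀ x ∈ Ioo a b, ∀ᶠ z in 𝓝 x, DifferentiableAt ℝ f z)
    (hdiff' : ∀ x ∈ Ioo a b, DifferentiableAt ℝ (deriv f) x)
    (hint : ∀ x ∈ Ioo a b, IntegrableOn (fun y => f (x + y) - f x) (Iio (0 : ℝ)) ν)
    (hsub : ∀ x ∈ Ioo a b, 0 ≤ gen δ σ ν f x - q * f x)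
    (hmax : ∃ c ∈ Ioo a b, ∀ x ∈ Iio b, f x ≤ f c) :
    ∀ x ∈ Iic b, f x = 0 := by
  obtain ⟨c, hc, hcmax⟩ := hmax
  -- `c` is a local max
  have hlm : IsLocalMax f c := by
    filter_upwards [Iio_mem_nhds hc.2] with x hx using hcmax x hx
  have hd1 : deriv f c = 0 := hlm.deriv_eq_zero
  -- second derivative nonpositive
  have hd2 : deriv (deriv f) c ≤ 0 := by
    by_contra h
    push_neg at h
    have hg : HasDerivAt (deriv f) (deriv (deriv f) c) c := (hdiff' c hc).hasDerivAt
    have hslope := hasDerivAt_iff_tendsto_slope.1 hg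
    have hpos : ∀ᶠ x in 𝓝[≠] c, 0 < slope (deriv f) c x :=
      hslope.eventually (eventually_gt_nhds h)
    have hpos' : ∀ᶠ x in 𝓝[>] c, 0 < deriv f x := by
      have hle : 𝓝[>] c ≤ 𝓝[≠] c := nhdsWithin_mono c fun x hx => ne_of_gt hx
      filter_upwards [hle hpos, self_mem_nhdsWithin] with x hx hx'
      have hxc : (0:ℝ) < x - c := sub_pos.2 hx'
      have h0 : slope (deriv f) c x = deriv f x / (x - c) := by
        rw [slope_def_field, hd1, sub_zero]
      rw [h0] at hx
      by_contra hle'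
      push_neg at hle'
      exact absurd hx (not_lt.2 (div_nonpos_of_nonpos_of_nonneg hle' hxc.le))
    have hIb : Iio b ∈ 𝓝[>] c := nhdsWithin_le_nhds (Iio_mem_nhds hc.2)
    obtain ⟨d, hd, hsub'⟩ := mem_nhdsGT_iff_exists_Ioc_subset.1 (hpos'.and hIb)
    have hdb : d < b := (hsub' ⟨hd, le_refl d⟩).2
    have hmono : StrictMonoOn f (Icc c d) := by
      apply strictMonoOn_of_deriv_pos (convex_Icc c d)
      · exact hcont.mono fun x hx => le_trans hx.2 hdb.le
      · intro x hx
        rw [interior_Icc] at hx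
        exact (hsub' ⟨hx.1, hx.2.le⟩).1
    have : f c < f d := hmono ⟨le_refl c, le_of_lt hd⟩ ⟨le_of_lt hd, le_refl d⟩ hd
    exact absurd (hcmax d hdb) (not_le.2 this)
  -- integral term nonpositive
  have hintnp : ∫ y in Iio (0 : ℝ), (f (c + y) - f c) ∂ν ≤ 0 := by
    apply setIntegral_nonpos measurableSet_Iio
    intro y hy
    have : c + y < b := by
      have : y < 0 := hy
      linarith [hc.2]
    linarith [hcmax (c + y) this]
  have hgen : gen δ σ ν f c ≤ 0 := by
    unfold gen
    have : σ ^ 2 / 2 * deriv (deriv f) c ≤ 0 :=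
      mul_nonpos_of_nonneg_of_nonpos (by positivity) hd2
    rw [hd1]
    linarith
  have hfc : f c = 0 := by
    have := hsub c hc
    have h1 : q * f c ≤ 0 := by linarith
    have h2 : 0 ≤ q * f c := mul_nonneg hq.le (hnn c)
    nlinarith [hnn c]
  have hzero : ∀ x ∈ Iio b, f x = 0 := fun x hx =>
    le_antisymm (hfc ▸ hcmax x hx) (hnn x)
  intro x hx
  rcases lt_or_eq_of_le (mem_Iic.mp hx) with hx | hx
  · exact hzero x hx
  · subst hx
    have h1 : Tendsto f (𝓝[<] x) (𝓝 (f x)) :=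
      (hcont x (mem_Iic.mpr le_rfl)).tendsto.mono_left
        (nhdsWithin_mono x Iio_subset_Iic_self)
    have h2 : Tendsto f (𝓝[<] x) (𝓝 0) := by
      have : ∀ᶠ y in 𝓝[<] x, f y = 0 := by
        filter_upwards [self_mem_nhdsWithin] with y hy using hzero y hy
      exact Tendsto.congr' (this.mono fun y hy => hy.symm) tendsto_const_nhds
    exact tendsto_nhds_unique h1 h2
end

section
/- Uniqueness for the one-sided boundary value problem (Proposition 2.6). Let q ≥ 0, a < b, and g : ℝ → ℝ. Suppose h₁, h₂ : ℝ → ℝ are Borel measurable, continuous on (−∞,b], twice differentiable at every point of (a,b) with y ↦ hᵢ(x+y) − hᵢ(x) Π-integrable for every x ∈ (a,b), and both satisfy the boundary value problem: ℒhᵢ(x) − q·hᵢ(x) = 0 for all x ∈ (a,b); hᵢ(x) = g(x) for all x ≤ a; and hᵢ(b) = g(b). Then h₁(x) = h₂(x) for all x ∈ (−∞,b]. -/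
open MeasureTheory Set Filter Topology

lemma aux_max
    (δ σ : ℝ) (ν : Measure ℝ) (hν0 : ν ≠ 0) (hνsupp : ν (Ici (0 : ℝ)) = 0)
    (q : ℝ) (hq : 0 ≤ q) (a b : ℝ) (hab : a < b) (u : ℝ → ℝ)
    (hmeas : Measurable u)
    (hc : ContinuousOn u (Iic b))
    (hd : ∀ x ∈ Ioo a b, DifferentiableAt ℝ u x)
    (hdd : ∀ x ∈ Ioo a b, DifferentiableAt ℝ (deriv u) x)
    (hint : ∀ x ∈ Ioo a b, IntegrableOn (fun y => u (x + y) - u x) (Iio (0 : ℝ)) ν)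
    (hgen : ∀ x ∈ Ioo a b,
      δ * deriv u x + σ ^ 2 / 2 * deriv (deriv u) x
        + (∫ y in Iio (0 : ℝ), (u (x + y) - u x) ∂ν) - q * u x = 0)
    (h0 : ∀ x ≤ a, u x = 0) (hub : u b = 0) :
    ∀ x ≤ b, u x ≤ 0 := by
  -- max over [a,b]
  have hKc : ContinuousOn u (Icc a b) := hc.mono (Icc_subset_Iic_self)
  obtain ⟨z, hzK, hz⟩ := isCompact_Icc.exists_isMaxOn (nonempty_Icc.2 hab.le) hKc
  set M := u z with hM
  have hM0 : 0 ≤ M := by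
    have := hz (show a ∈ Icc a b from ⟨le_rfl, hab.le⟩)
    simpa [h0 a le_rfl] using this
  have hle : ∀ x ≤ b, u x ≤ M := by
    intro x hx
    rcases le_or_gt x a with h | h
    · simpa [h0 x h] using hM0
    · exact hz ⟨h.le, hx⟩
  -- it suffices to show M ≤ 0
  rcases le_or_gt M 0 with hM' | hMpos
  · intro x hx; exact (hle x hx).trans hM'
  exfalso
  -- minimal maximizer
  set S : Set ℝ := Icc a b ∩ u ⁻¹' {M} with hSdef
  have hScl : IsClosed S := hKc.preimage_isClosed_of_isClosed isClosed_Icc isClosed_singleton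
  have hSne : S.Nonempty := ⟨z, hzK, rfl⟩
  have hSbdd : BddBelow S := ⟨a, fun x hx => hx.1.1⟩
  set m := sInf S with hmdef
  have hmS : m ∈ S := hScl.csInf_mem hSne hSbdd
  have hum : u m = M := hmS.2
  have hma : a < m := lt_of_le_of_ne hmS.1.1
    (fun h => by rw [← h, h0 a le_rfl] at hum; linarith)
  have hmb : m < b := by
    rcases hmS.1.2.lt_or_eq with h | h
    · exact h
    · rw [h, hub] at hum; linarith
  have hmI : m ∈ Ioo a b := ⟨hma, hmb⟩
  -- first derivative zero
  have hloc : IsLocalMax u m := by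
    filter_upwards [Iio_mem_nhds hmb] with x hx
    exact hum ▸ hle x hx.le
  have hd1 : deriv u m = 0 := hloc.deriv_eq_zero
  -- second derivative nonpositive
  have hd2 : deriv (deriv u) m ≤ 0 := by
    by_contra hpos
    push_neg at hpos
    have hder : HasDerivAt (deriv u) (deriv (deriv u) m) m := (hdd m hmI).hasDerivAt
    have hslope := hasDerivAt_iff_tendsto_slope.1 hder
    have hev : ∀ᶠ t in 𝓝[≠] m, 0 < slope (deriv u) m t :=
      hslope.eventually (eventually_gt_nhds hpos)
    have hev' : ∀ᶠ t in 𝓝[<] m, 0 < slope (deriv u) m t :=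
      hev.filter_mono (nhdsWithin_mono m (fun t ht => ne_of_lt ht))
    have hev2 : ∀ᶠ t in 𝓝[<] m, t ∈ Ioo a m :=
      eventually_of_mem (Ioo_mem_nhdsLT_of_mem ⟨hma, le_rfl⟩) fun t ht => ht
    obtain ⟨l, hl, hIoo⟩ := mem_nhdsLT_iff_exists_Ioo_subset.1 (hev'.and hev2)
    set t₀ := (max l a + m) / 2 with ht₀
    have hlt : max l a < m := max_lt hl hma
    have ht₀I : t₀ ∈ Ioo (max l a) m := ⟨by rw [ht₀]; linarith, by rw [ht₀]; linarith⟩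
    have ht₀l : t₀ ∈ Ioo l m := ⟨lt_of_le_of_lt (le_max_left l a) ht₀I.1, ht₀I.2⟩
    have hneg : ∀ x ∈ Ioo t₀ m, deriv u x < 0 := by
      intro x hx
      have hx' : x ∈ Ioo l m := ⟨ht₀l.1.trans hx.1, hx.2⟩
      obtain ⟨hs, _⟩ := hIoo hx'
      have hx2 : x < m := hx.2
      have hsl : slope (deriv u) m x = deriv u x / (x - m) := by
        rw [slope_def_field, hd1]; ring
      rw [hsl] at hs
      by_contra hge
      push_neg at hge
      have : deriv u x / (x - m) ≤ 0 :=
        div_nonpos_of_nonneg_of_nonpos hge (by linarith)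
      linarith
    have hanti : StrictAntiOn u (Icc t₀ m) :=
      strictAntiOn_of_deriv_neg (convex_Icc _ _)
        (hc.mono (fun x hx => (hx.2.trans hmb.le : x ≤ b)))
        (by rw [interior_Icc]; exact hneg)
    have := hanti ⟨le_rfl, ht₀I.2.le⟩ ⟨ht₀I.2.le, le_rfl⟩ ht₀I.2
    rw [hum] at this
    have ht₀b : t₀ ≤ b := ht₀I.2.le.trans hmb.le
    exact absurd (hle t₀ ht₀b) (by linarith)
  -- jump term nonpositive
  set J := ∫ y in Iio (0 : ℝ), (u (m + y) - u m) ∂ν with hJdef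
  have hJle : J ≤ 0 := by
    apply setIntegral_nonpos measurableSet_Iio
    intro y hy
    have : m + y ≤ b := by have : y < 0 := hy; linarith
    have := hle (m + y) this
    rw [hum]; linarith
  -- from the equation, J = 0
  have heqm := hgen m hmI
  rw [hd1] at heqm
  have hσ2 : (0:ℝ) ≤ σ ^ 2 / 2 := by positivity
  have hJ0 : J = 0 := by nlinarith [mul_nonneg hq hMpos.le, mul_nonpos_of_nonneg_of_nonpos hσ2 hd2]
  -- hence integrand is a.e. zero
  have hintm := hint m hmI
  have hnonneg : 0 ≤ᶠ[ae (ν.restrict (Iio (0:ℝ)))] (fun y => u m - u (m + y)) := by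
    rw [EventuallyLE, ae_restrict_iff' measurableSet_Iio]
    filter_upwards with y hy
    have : m + y ≤ b := by have : y < 0 := hy; linarith
    have := hle (m + y) this
    simp only [Pi.zero_apply]; rw [hum]; linarith
  have hintm' : Integrable (fun y => u m - u (m + y)) (ν.restrict (Iio (0:ℝ))) := by
    have h := hintm.neg
    have heq : (fun y => u m - u (m + y)) = (fun y => -(u (m + y) - u m)) := by
      funext y; ring
    rw [heq]; exact h
  have hzero : (∫ y in Iio (0:ℝ), (u m - u (m + y)) ∂ν) = 0 := by
    have : (∫ y in Iio (0:ℝ), (u m - u (m + y)) ∂ν) = -J := by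
      rw [hJdef, ← integral_neg]; congr 1; funext y; ring
    rw [this, hJ0, neg_zero]
  have hae : (fun y => u m - u (m + y)) =ᶠ[ae (ν.restrict (Iio (0:ℝ)))] 0 :=
    (integral_eq_zero_iff_of_nonneg_ae hnonneg hintm').1 hzero
  -- ν(Iio 0) > 0
  have hνI : ν.restrict (Iio (0:ℝ)) ≠ 0 := by
    intro h
    apply hν0
    have h1 : ν (Iio (0:ℝ)) = 0 := by
      have := congrArg (fun μ : Measure ℝ => μ univ) h
      simpa [Measure.restrict_apply_univ] using this
    have h2 : ν univ ≤ ν (Iio 0) + ν (Ici 0) := by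
      rw [← Iio_union_Ici (a := (0:ℝ))]; exact measure_union_le _ _
    rw [h1, hνsupp, add_zero] at h2
    exact Measure.measure_univ_eq_zero.1 (le_antisymm h2 zero_le)
  haveI : (ae (ν.restrict (Iio (0:ℝ)))).NeBot := ae_neBot.2 hνI
  obtain ⟨y, hy0, hymem⟩ := (hae.and (ae_restrict_mem measurableSet_Iio)).exists
  -- contradiction: m + y is a smaller maximizer
  have hymax : u (m + y) = M := by
    simp only [Pi.zero_apply] at hy0
    rw [← hum]; linarith
  have hyneg : y < 0 := hymem
  rcases le_or_gt (m + y) a with h | h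
  · rw [h0 _ h] at hymax; linarith
  · have : m + y ∈ S := ⟨⟨h.le, by linarith⟩, hymax⟩
    have := csInf_le hSbdd this
    rw [← hmdef] at this
    linarith

lemma gen_sub (δ σ : ℝ) (ν : Measure ℝ) (a b : ℝ)
    (h₁ h₂ : ℝ → ℝ)
    (hd1 : ∀ x ∈ Ioo a b, DifferentiableAt ℝ h₁ x ∧ DifferentiableAt ℝ (deriv h₁) x)
    (hd2 : ∀ x ∈ Ioo a b, DifferentiableAt ℝ h₂ x ∧ DifferentiableAt ℝ (deriv h₂) x)
    (hi1 : ∀ x ∈ Ioo a b, IntegrableOn (fun y => h₁ (x + y) - h₁ x) (Iio (0 : ℝ)) ν)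
    (hi2 : ∀ x ∈ Ioo a b, IntegrableOn (fun y => h₂ (x + y) - h₂ x) (Iio (0 : ℝ)) ν)
    {x : ℝ} (hx : x ∈ Ioo a b) :
    gen δ σ ν (fun t => h₁ t - h₂ t) x = gen δ σ ν h₁ x - gen δ σ ν h₂ x := by
  set u : ℝ → ℝ := fun t => h₁ t - h₂ t with hu
  have hev : deriv u =ᶠ[𝓝 x] fun y => deriv h₁ y - deriv h₂ y := by
    filter_upwards [isOpen_Ioo.mem_nhds hx] with y hy
    exact deriv_sub (hd1 y hy).1 (hd2 y hy).1
  have d1 : deriv u x = deriv h₁ x - deriv h₂ x := hev.self_of_nhds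
  have d2 : deriv (deriv u) x = deriv (deriv h₁) x - deriv (deriv h₂) x := by
    rw [hev.deriv_eq]
    exact deriv_sub (hd1 x hx).2 (hd2 x hx).2
  have dint : (∫ y in Iio (0:ℝ), (u (x + y) - u x) ∂ν)
      = (∫ y in Iio (0:ℝ), (h₁ (x + y) - h₁ x) ∂ν)
        - (∫ y in Iio (0:ℝ), (h₂ (x + y) - h₂ x) ∂ν) := by
    rw [← integral_sub (hi1 x hx) (hi2 x hx)]
    congr 1; funext y; simp only [hu]; ring
  simp only [gen, d1, d2, dint]; ring

lemma sub_le_aux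
    (δ σ : ℝ) (ν : Measure ℝ) (hν0 : ν ≠ 0) (hνsupp : ν (Ici (0 : ℝ)) = 0)
    (q : ℝ) (hq : 0 ≤ q) (a b : ℝ) (hab : a < b) (g h₁ h₂ : ℝ → ℝ)
    (hm1 : Measurable h₁) (hm2 : Measurable h₂)
    (hc1 : ContinuousOn h₁ (Iic b)) (hc2 : ContinuousOn h₂ (Iic b))
    (hd1 : ∀ x ∈ Ioo a b, DifferentiableAt ℝ h₁ x ∧ DifferentiableAt ℝ (deriv h₁) x)
    (hd2 : ∀ x ∈ Ioo a b, DifferentiableAt ℝ h₂ x ∧ DifferentiableAt ℝ (deriv h₂) x)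
    (hi1 : ∀ x ∈ Ioo a b, IntegrableOn (fun y => h₁ (x + y) - h₁ x) (Iio (0 : ℝ)) ν)
    (hi2 : ∀ x ∈ Ioo a b, IntegrableOn (fun y => h₂ (x + y) - h₂ x) (Iio (0 : ℝ)) ν)
    (heq1 : ∀ x ∈ Ioo a b, gen δ σ ν h₁ x - q * h₁ x = 0)
    (heq2 : ∀ x ∈ Ioo a b, gen δ σ ν h₂ x - q * h₂ x = 0)
    (hbd1 : ∀ x ≤ a, h₁ x = g x) (hbd2 : ∀ x ≤ a, h₂ x = g x)
    (hb1 : h₁ b = g b) (hb2 : h₂ b = g b) :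
    ∀ x ≤ b, h₁ x - h₂ x ≤ 0 := by
  set u : ℝ → ℝ := fun t => h₁ t - h₂ t with hu
  have hmeas : Measurable u := hm1.sub hm2
  have hc : ContinuousOn u (Iic b) := hc1.sub hc2
  have hd : ∀ x ∈ Ioo a b, DifferentiableAt ℝ u x :=
    fun x hx => ((hd1 x hx).1.sub (hd2 x hx).1)
  have hdd : ∀ x ∈ Ioo a b, DifferentiableAt ℝ (deriv u) x := by
    intro x hx
    have hev : deriv u =ᶠ[𝓝 x] fun y => deriv h₁ y - deriv h₂ y := by
      filter_upwards [isOpen_Ioo.mem_nhds hx] with y hy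
      exact deriv_sub (hd1 y hy).1 (hd2 y hy).1
    exact hev.differentiableAt_iff.2 ((hd1 x hx).2.sub (hd2 x hx).2)
  have hint : ∀ x ∈ Ioo a b, IntegrableOn (fun y => u (x + y) - u x) (Iio (0 : ℝ)) ν := by
    intro x hx
    have h := (hi1 x hx).sub (hi2 x hx)
    have heq : (fun y => u (x + y) - u x)
        = fun y => (h₁ (x + y) - h₁ x) - (h₂ (x + y) - h₂ x) := by
      funext y; simp only [hu]; ring
    rw [heq]; exact h
  have hgen : ∀ x ∈ Ioo a b,
      δ * deriv u x + σ ^ 2 / 2 * deriv (deriv u) x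
        + (∫ y in Iio (0 : ℝ), (u (x + y) - u x) ∂ν) - q * u x = 0 := by
    intro x hx
    have hs := gen_sub δ σ ν a b h₁ h₂ hd1 hd2 hi1 hi2 hx
    have e1 := heq1 x hx
    have e2 := heq2 x hx
    have key : gen δ σ ν u x - q * u x = 0 := by
      show gen δ σ ν (fun t => h₁ t - h₂ t) x - q * (h₁ x - h₂ x) = 0
      rw [hs]; linarith
    simpa [gen] using key
  have h0 : ∀ x ≤ a, u x = 0 := by
    intro x hx
    show h₁ x - h₂ x = 0
    rw [hbd1 x hx, hbd2 x hx]; ring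
  have hub : u b = 0 := by
    show h₁ b - h₂ b = 0
    rw [hb1, hb2]; ring
  exact aux_max δ σ ν hν0 hνsupp q hq a b hab u hmeas hc hd hdd hint hgen h0 hub

/-- Uniqueness for the one-sided boundary value problem (Proposition 2.6):
two solutions of `(ℒ - q)h = 0` on `(a,b)` with `h = g` on `(-∞,a]` and `h(b) = g(b)`
coincide on `(-∞,b]`. -/
theorem stmt3
    (δ σ : ℝ) (hσ : 0 ≤ σ)
    (ν : Measure ℝ) (hν0 : ν ≠ 0) (hνsupp : ν (Ici (0 : ℝ)) = 0)
    (hνint : IntegrableOn (fun y => min 1 |y|) (Iio (0 : ℝ)) ν)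
    (q : ℝ) (hq : 0 ≤ q) (a b : ℝ) (hab : a < b) (g h₁ h₂ : ℝ → ℝ)
    (hm1 : Measurable h₁) (hm2 : Measurable h₂)
    (hc1 : ContinuousOn h₁ (Iic b)) (hc2 : ContinuousOn h₂ (Iic b))
    (hd1 : ∀ x ∈ Ioo a b, DifferentiableAt ℝ h₁ x ∧ DifferentiableAt ℝ (deriv h₁) x)
    (hd2 : ∀ x ∈ Ioo a b, DifferentiableAt ℝ h₂ x ∧ DifferentiableAt ℝ (deriv h₂) x)
    (hi1 : ∀ x ∈ Ioo a b, IntegrableOn (fun y => h₁ (x + y) - h₁ x) (Iio (0 : ℝ)) ν)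
    (hi2 : ∀ x ∈ Ioo a b, IntegrableOn (fun y => h₂ (x + y) - h₂ x) (Iio (0 : ℝ)) ν)
    (heq1 : ∀ x ∈ Ioo a b, gen δ σ ν h₁ x - q * h₁ x = 0)
    (heq2 : ∀ x ∈ Ioo a b, gen δ σ ν h₂ x - q * h₂ x = 0)
    (hbd1 : ∀ x ≤ a, h₁ x = g x) (hbd2 : ∀ x ≤ a, h₂ x = g x)
    (hb1 : h₁ b = g b) (hb2 : h₂ b = g b) :
    ∀ x ≤ b, h₁ x = h₂ x := by
  intro x hx
  have hA := sub_le_aux δ σ ν hν0 hνsupp q hq a b hab g h₁ h₂ hm1 hm2 hc1 hc2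
    hd1 hd2 hi1 hi2 heq1 heq2 hbd1 hbd2 hb1 hb2 x hx
  have hB := sub_le_aux δ σ ν hν0 hνsupp q hq a b hab g h₂ h₁ hm2 hm1 hc2 hc1
    hd2 hd1 hi2 hi1 heq2 heq1 hbd2 hbd1 hb2 hb1 x hx
  linarith
end

section
/- Lemma 5.2 of the paper (strict domination of the smooth Gerber–Shiu continuation, bounded variation case). Assume σ = 0 and δ > 0. Let a < b and let g, h : ℝ → ℝ be continuous with h(x) = g(x) for all x ≤ a. Assume: g and h are differentiable on (a,b); f := h − g is continuously differentiable on (a,b) with f′ bounded on (a,(a+b)/2) and with lim_{x↓a} f′(x) existing; for every x ∈ [a,b) the maps y ↦ g(x+y) − g(x) and y ↦ h(x+y) − h(x) are Π-integrable on (−∞,0); ℒh(x) = 0 for all x ∈ (a,b); and x ↦ ℒg(x) is continuous on [a,b) with ℒg(x) < 0 for all x ∈ [a,b). Then f = h − g is strictly increasing on (a,b); in particular h(x) > g(x) for all x ∈ (a,b). -/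
open MeasureTheory Set Filter Topology

/-- Lemma 5.2 (bounded variation case `σ = 0`, `δ > 0`): if `h` agrees with `g`
on `(-∞,a]`, is harmonic on `(a,b)` while `ℒg < 0` on `[a,b)`, then `h - g` is
strictly increasing on `(a,b)`; in particular `h > g` on `(a,b)`. -/
theorem stmt5
    (δ σ : ℝ) (hσ : σ = 0) (hδ : 0 < δ)
    (ν : Measure ℝ) (hν0 : ν ≠ 0) (hνsupp : ν (Ici (0 : ℝ)) = 0)
    (hνint : IntegrableOn (fun y => min 1 |y|) (Iio (0 : ℝ)) ν)
    (a b : ℝ) (hab : a < b) (g h : ℝ → ℝ)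
    (hgc : Continuous g) (hhc : Continuous h)
    (hagree : ∀ x ≤ a, h x = g x)
    (hgdiff : ∀ x ∈ Ioo a b, DifferentiableAt ℝ g x)
    (hhdiff : ∀ x ∈ Ioo a b, DifferentiableAt ℝ h x)
    (hfC1 : ContinuousOn (deriv (fun z => h z - g z)) (Ioo a b))
    (hf'bdd : ∃ M, ∀ x ∈ Ioo a ((a + b) / 2), |deriv (fun z => h z - g z) x| ≤ M)
    (hf'lim : ∃ L, Tendsto (deriv (fun z => h z - g z)) (𝓝[>] a) (𝓝 L))
    (hgint : ∀ x ∈ Ico a b, IntegrableOn (fun y => g (x + y) - g x) (Iio (0 : ℝ)) ν)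
    (hhint : ∀ x ∈ Ico a b, IntegrableOn (fun y => h (x + y) - h x) (Iio (0 : ℝ)) ν)
    (hharm : ∀ x ∈ Ioo a b, gen δ σ ν h x = 0)
    (hLgcont : ContinuousOn (fun x => gen δ σ ν g x) (Ico a b))
    (hLgneg : ∀ x ∈ Ico a b, gen δ σ ν g x < 0) :
    StrictMonoOn (fun z => h z - g z) (Ioo a b) ∧ ∀ x ∈ Ioo a b, g x < h x := by
  set f : ℝ → ℝ := fun z => h z - g z with hfdef
  obtain ⟨M, hM⟩ := hf'bdd
  obtain ⟨L, hL⟩ := hf'lim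
  set m : ℝ := (a + b) / 2 with hm
  have ham : a < m := by rw [hm]; linarith
  have hmb : m < b := by rw [hm]; linarith
  have hfc : Continuous f := hhc.sub hgc
  have hf0 : ∀ x, x ≤ a → f x = 0 := fun x hx => by
    simp [hfdef, hagree x hx]
  have hfd : ∀ x ∈ Ioo a b, DifferentiableAt ℝ f x := fun x hx =>
    (hhdiff x hx).sub (hgdiff x hx)
  have hM0 : 0 ≤ M :=
    le_trans (abs_nonneg _) (hM ((a + m) / 2) ⟨by linarith, by linarith⟩)
  -- Lipschitz-type bound on the open interval (a, m)
  have hlip : ∀ u v : ℝ, u ∈ Ioo a m → v ∈ Ioo a m → |f u - f v| ≤ M * |u - v| := by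
    intro u v hu hv
    have := Convex.norm_image_sub_le_of_norm_deriv_le (𝕜 := ℝ) (s := Ioo a m)
      (fun x hx => hfd x ⟨hx.1, hx.2.trans hmb⟩)
      (fun x hx => by simpa [Real.norm_eq_abs] using hM x hx)
      (convex_Ioo a m) hv hu
    simpa [Real.norm_eq_abs] using this
  -- |f x| ≤ M (x - a) near a
  have habs : ∀ x ∈ Ioo a m, |f x| ≤ M * (x - a) := by
    intro x hx
    have e1 : Tendsto (fun v => |f x - f v|) (𝓝[>] a) (𝓝 |f x|) := by
      have t : Tendsto (fun v => |f x - f v|) (𝓝 a) (𝓝 |f x - f a|) :=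
        ((continuous_const.sub hfc).abs).tendsto a
      rw [hf0 a le_rfl, sub_zero] at t
      exact t.mono_left nhdsWithin_le_nhds
    have e2 : Tendsto (fun v : ℝ => M * (x - v)) (𝓝[>] a) (𝓝 (M * (x - a))) := by
      have : Tendsto (fun v : ℝ => M * (x - v)) (𝓝 a) (𝓝 (M * (x - a))) := by
        exact tendsto_const_nhds.mul (tendsto_const_nhds.sub tendsto_id)
      exact this.mono_left nhdsWithin_le_nhds
    refine le_of_tendsto_of_tendsto e1 e2 ?_
    filter_upwards [Ioo_mem_nhdsGT_of_mem ⟨le_rfl, hx.1⟩] with v hv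
    have h1 := hlip x v hx ⟨hv.1, hv.2.trans hx.2⟩
    have h2 : |x - v| = x - v := abs_of_pos (by linarith [hv.2])
    rw [h2] at h1
    exact h1
  -- the key identity coming from harmonicity of h
  have hσ2 : σ ^ 2 / 2 = 0 := by rw [hσ]; norm_num
  have key : ∀ x ∈ Ioo a b,
      δ * deriv f x + ∫ y in Iio (0 : ℝ), (f (x + y) - f x) ∂ν = - gen δ σ ν g x := by
    intro x hx
    have hic : x ∈ Ico a b := ⟨hx.1.le, hx.2⟩
    have hd : deriv f x = deriv h x - deriv g x := deriv_sub (hhdiff x hx) (hgdiff x hx)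
    have hint : ∫ y in Iio (0 : ℝ), (f (x + y) - f x) ∂ν
        = (∫ y in Iio (0 : ℝ), (h (x + y) - h x) ∂ν)
          - ∫ y in Iio (0 : ℝ), (g (x + y) - g x) ∂ν := by
      rw [← integral_sub (hhint x hic) (hgint x hic)]
      congr 1
      funext y
      simp only [hfdef]
      ring
    have hh0 := hharm x hx
    simp only [gen, hσ2, zero_mul, add_zero, zero_add] at hh0 ⊢
    rw [hd, hint]
    linarith
  -- the nonlocal term tends to 0 as x → a⁺
  have hmeas : ∀ x : ℝ, AEStronglyMeasurable (fun y => f (x + y) - f x)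
      (ν.restrict (Iio (0 : ℝ))) := fun x =>
    ((hfc.comp (continuous_const.add continuous_id)).sub continuous_const).aestronglyMeasurable
  have hI0 : Tendsto (fun x => ∫ y in Iio (0 : ℝ), (f (x + y) - f x) ∂ν) (𝓝[>] a) (𝓝 0) := by
    have hε : a < min (a + 1) m := lt_min (by linarith) ham
    have bdd : ∀ᶠ x in 𝓝[>] a, ∀ᵐ y ∂(ν.restrict (Iio (0 : ℝ))),
        ‖f (x + y) - f x‖ ≤ M * min 1 |y| := by
      filter_upwards [Ioo_mem_nhdsGT_of_mem ⟨le_rfl, hε⟩] with x hx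
      refine (ae_restrict_iff' measurableSet_Iio).mpr (ae_of_all _ ?_)
      intro y hy
      have hy0 : y < 0 := hy
      have hxa : a < x := hx.1
      have hx1 : x < a + 1 := lt_of_lt_of_le hx.2 (min_le_left _ _)
      have hxm : x < m := lt_of_lt_of_le hx.2 (min_le_right _ _)
      rw [Real.norm_eq_abs]
      by_cases hcase : x + y ≤ a
      · rw [hf0 _ hcase, zero_sub, abs_neg]
        have h1 : |f x| ≤ M * (x - a) := habs x ⟨hxa, hxm⟩
        have h2 : x - a ≤ min 1 |y| := by
          refine le_min (by linarith) ?_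
          rw [abs_of_neg hy0]; linarith
        calc |f x| ≤ M * (x - a) := h1
          _ ≤ M * min 1 |y| := mul_le_mul_of_nonneg_left h2 hM0
      · push_neg at hcase
        have hxy : x + y ∈ Ioo a m := ⟨hcase, by linarith⟩
        have h1 := hlip (x + y) x hxy ⟨hxa, hxm⟩
        have hys : |x + y - x| = |y| := by
          congr 1; ring
        rw [hys] at h1
        have hy1 : |y| ≤ 1 := by rw [abs_of_neg hy0]; linarith
        rw [min_eq_right hy1]
        exact h1
    have intb : Integrable (fun y => M * min 1 |y|) (ν.restrict (Iio (0 : ℝ))) :=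
      hνint.const_mul M
    have limf : ∀ᵐ y ∂(ν.restrict (Iio (0 : ℝ))),
        Tendsto (fun x => f (x + y) - f x) (𝓝[>] a) (𝓝 0) := by
      refine (ae_restrict_iff' measurableSet_Iio).mpr (ae_of_all _ ?_)
      intro y hy
      have hy0 : y < 0 := hy
      have t : Tendsto (fun x => f (x + y) - f x) (𝓝 a) (𝓝 (f (a + y) - f a)) :=
        ((hfc.comp (continuous_id.add continuous_const)).sub hfc).tendsto a
      rw [hf0 (a + y) (by linarith), hf0 a le_rfl, sub_zero] at t
      exact t.mono_left nhdsWithin_le_nhds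
    have := tendsto_integral_filter_of_dominated_convergence
      (μ := ν.restrict (Iio (0 : ℝ))) (F := fun x y => f (x + y) - f x)
      (f := fun _ => (0 : ℝ)) (bound := fun y => M * min 1 |y|)
      (Eventually.of_forall hmeas) bdd intb limf
    simpa using this
  -- the limit L of f' at a⁺ is positive
  have hLpos : 0 < L := by
    have ev : (fun x => δ * deriv f x + ∫ y in Iio (0 : ℝ), (f (x + y) - f x) ∂ν)
        =ᶠ[𝓝[>] a] fun x => - gen δ σ ν g x := by
      filter_upwards [Ioo_mem_nhdsGT_of_mem ⟨le_rfl, hab⟩] with x hx using key x hx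
    have t1 : Tendsto (fun x => δ * deriv f x + ∫ y in Iio (0 : ℝ), (f (x + y) - f x) ∂ν)
        (𝓝[>] a) (𝓝 (δ * L + 0)) := (hL.const_mul δ).add hI0
    have t2 : Tendsto (fun x => - gen δ σ ν g x) (𝓝[>] a) (𝓝 (- gen δ σ ν g a)) := by
      have t := (hLgcont a ⟨le_rfl, hab⟩).tendsto
      have hle : 𝓝[>] a ≤ 𝓝[Ico a b] a := by
        rw [← nhdsWithin_Ioo_eq_nhdsGT hab]
        exact nhdsWithin_mono a Ioo_subset_Ico_self
      exact (t.mono_left hle).neg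
    have huniq := tendsto_nhds_unique (t1.congr' ev) t2
    have hga := hLgneg a ⟨le_rfl, hab⟩
    nlinarith
  -- f' > 0 on all of (a, b)
  have hpos : ∀ x ∈ Ioo a b, 0 < deriv f x := by
    by_contra hcon
    push_neg at hcon
    obtain ⟨x₀, hx₀, hx₀'⟩ := hcon
    set S : Set ℝ := {x | x ∈ Ioo a b ∧ deriv f x ≤ 0} with hS
    have hSne : S.Nonempty := ⟨x₀, hx₀, hx₀'⟩
    have hSbdd : BddBelow S := ⟨a, fun x hx => hx.1.1.le⟩
    have ev : ∀ᶠ x in 𝓝[>] a, 0 < deriv f x := hL.eventually (eventually_gt_nhds hLpos)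
    obtain ⟨u, hu, huS⟩ := mem_nhdsGT_iff_exists_Ioc_subset.mp ev
    set c := sInf S with hc
    have hcu : u ≤ c := by
      refine le_csInf hSne fun x hx => ?_
      by_contra hlt
      push_neg at hlt
      have := huS ⟨hx.1.1, hlt.le⟩
      exact absurd hx.2 (not_le.mpr this)
    have hca : a < c := lt_of_lt_of_le hu hcu
    have hcb : c < b := lt_of_le_of_lt (csInf_le hSbdd ⟨hx₀, hx₀'⟩) hx₀.2
    have hccl : c ∈ closure S := csInf_mem_closure hSne hSbdd
    have hcCA : ContinuousAt (deriv f) c := hfC1.continuousAt (Ioo_mem_nhds hca hcb)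
    have hderivc : deriv f c ≤ 0 := by
      haveI hne : (𝓝[S] c).NeBot := mem_closure_iff_nhdsWithin_neBot.mp hccl
      refine le_of_tendsto (hcCA.tendsto.mono_left (nhdsWithin_le_nhds (s := S))) ?_
      filter_upwards [self_mem_nhdsWithin] with x hx using hx.2
    have hposac : ∀ x ∈ Ioo a c, 0 < deriv f x := by
      intro x hx
      by_contra hle
      push_neg at hle
      have hxS : x ∈ S := ⟨⟨hx.1, hx.2.trans hcb⟩, hle⟩
      exact absurd (csInf_le hSbdd hxS) (not_le.mpr hx.2)
    have hmono : StrictMonoOn f (Icc a c) :=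
      strictMonoOn_of_deriv_pos (convex_Icc a c) hfc.continuousOn
        (fun x hx => hposac x (by rwa [interior_Icc] at hx))
    have hfcpos : 0 < f c := by
      have := hmono ⟨le_rfl, hca.le⟩ ⟨hca.le, le_rfl⟩ hca
      rwa [hf0 a le_rfl] at this
    have hle_fc : ∀ y : ℝ, y < 0 → f (c + y) - f c ≤ 0 := by
      intro y hy
      by_cases hcy : c + y ≤ a
      · rw [hf0 _ hcy]; linarith
      · push_neg at hcy
        have := hmono ⟨hcy.le, by linarith⟩ ⟨hca.le, le_rfl⟩ (by linarith)
        linarith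
    have hIneg : ∫ y in Iio (0 : ℝ), (f (c + y) - f c) ∂ν ≤ 0 := by
      refine integral_nonpos_of_ae ?_
      exact (ae_restrict_iff' measurableSet_Iio).mpr (ae_of_all _ fun y hy => hle_fc y hy)
    have hkey := key c ⟨hca, hcb⟩
    have hg0 := hLgneg c ⟨hca.le, hcb⟩
    nlinarith [mul_nonpos_of_nonneg_of_nonpos hδ.le hderivc]
  have hmonoIcc : StrictMonoOn f (Icc a b) :=
    strictMonoOn_of_deriv_pos (convex_Icc a b) hfc.continuousOn
      (fun x hx => hpos x (by rwa [interior_Icc] at hx))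
  refine ⟨hmonoIcc.mono Ioo_subset_Icc_self, fun x hx => ?_⟩
  have hx0 := hmonoIcc ⟨le_rfl, hab.le⟩ ⟨hx.1.le, hx.2.le⟩ hx.1
  rw [hf0 a le_rfl] at hx0
  have : 0 < h x - g x := by simpa [hfdef] using hx0
  linarith
end

section
/- Lemma 5.2 of the paper (strict domination of the smooth Gerber–Shiu continuation, unbounded variation case). Assume σ > 0. Let a < b and let g, h : ℝ → ℝ be continuous with h(x) = g(x) for x ≤ a and with the smooth-fit condition h′(a) = g′(a), so that f := h − g is continuously differentiable on ℝ with f = 0 on (−∞,a] and f′(a) = 0. Assume: f is twice continuously differentiable on (a,b) with f′ and f″ bounded on (a,(a+b)/2) and with lim_{x↓a} f″(x) existing; g and h are twice differentiable on (a,b) with y ↦ g(x+y) − g(x) and y ↦ h(x+y) − h(x) Π-integrable for every x ∈ [a,b); ℒh(x) = 0 for all x ∈ (a,b); and x ↦ ℒg(x) is continuous on [a,b) with ℒg(x) < 0 for all x ∈ [a,b). Then f = h − g is strictly increasing on (a,b); in particular h(x) > g(x) for all x ∈ (a,b). -/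
open MeasureTheory Set Filter Topology

lemma pos_on_of_strictMonoOn {φ : ℝ → ℝ} {a b : ℝ}
    (hφ : Tendsto φ (𝓝[>] a) (𝓝 0)) (hm : StrictMonoOn φ (Ioo a b)) :
    ∀ x ∈ Ioo a b, 0 < φ x := by
  have key : ∀ x ∈ Ioo a b, 0 ≤ φ x := by
    intro x hx
    refine le_of_tendsto hφ ?_
    filter_upwards [Ioo_mem_nhdsGT_of_mem ⟨le_refl a, hx.1⟩] with s hs
    exact (hm ⟨hs.1, hs.2.trans hx.2⟩ hx hs.2).le
  intro x hx
  obtain ⟨w, hw⟩ : ∃ w, w ∈ Ioo a x := ⟨(a+x)/2, by constructor <;> [linarith [hx.1]; linarith [hx.1]]⟩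
  have hw' : w ∈ Ioo a b := ⟨hw.1, hw.2.trans hx.2⟩
  exact (key w hw').trans_lt (hm hw' hx hw.2)

/-- Lemma 5.2 (unbounded variation case `σ > 0`): if `h` agrees with `g` on
`(-∞,a]` with smooth fit `h'(a) = g'(a)`, is harmonic on `(a,b)` while
`ℒg < 0` on `[a,b)`, then `h - g` is strictly increasing on `(a,b)`;
in particular `h > g` on `(a,b)`. -/
theorem stmt6
    (δ σ : ℝ) (hσ : 0 < σ)
    (ν : Measure ℝ) (hν0 : ν ≠ 0) (hνsupp : ν (Ici (0 : ℝ)) = 0)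
    (hνint : IntegrableOn (fun y => min 1 |y|) (Iio (0 : ℝ)) ν)
    (a b : ℝ) (hab : a < b) (g h : ℝ → ℝ)
    (hgc : Continuous g) (hhc : Continuous h)
    (hagree : ∀ x ≤ a, h x = g x)
    (hfit : deriv h a = deriv g a)
    (hfC1 : ContDiff ℝ 1 (fun z => h z - g z))
    (hf'a : deriv (fun z => h z - g z) a = 0)
    (hf2 : ∀ x ∈ Ioo a b, DifferentiableAt ℝ (deriv (fun z => h z - g z)) x)
    (hf2cont : ContinuousOn (deriv (deriv (fun z => h z - g z))) (Ioo a b))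
    (hfbdd : ∃ M, ∀ x ∈ Ioo a ((a + b) / 2),
      |deriv (fun z => h z - g z) x| ≤ M ∧ |deriv (deriv (fun z => h z - g z)) x| ≤ M)
    (hf''lim : ∃ L, Tendsto (deriv (deriv (fun z => h z - g z))) (𝓝[>] a) (𝓝 L))
    (hgdiff : ∀ x ∈ Ioo a b, DifferentiableAt ℝ g x ∧ DifferentiableAt ℝ (deriv g) x)
    (hhdiff : ∀ x ∈ Ioo a b, DifferentiableAt ℝ h x ∧ DifferentiableAt ℝ (deriv h) x)
    (hgint : ∀ x ∈ Ico a b, IntegrableOn (fun y => g (x + y) - g x) (Iio (0 : ℝ)) ν)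
    (hhint : ∀ x ∈ Ico a b, IntegrableOn (fun y => h (x + y) - h x) (Iio (0 : ℝ)) ν)
    (hharm : ∀ x ∈ Ioo a b, gen δ σ ν h x = 0)
    (hLgcont : ContinuousOn (fun x => gen δ σ ν g x) (Ico a b))
    (hLgneg : ∀ x ∈ Ico a b, gen δ σ ν g x < 0) :
    StrictMonoOn (fun z => h z - g z) (Ioo a b) ∧ ∀ x ∈ Ioo a b, g x < h x := by
  set f : ℝ → ℝ := fun z => h z - g z with hfdef
  have hfc : Continuous f := hhc.sub hgc
  have hfdiff : Differentiable ℝ f := hfC1.differentiable one_ne_zero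
  have hf'c : Continuous (deriv f) := hfC1.continuous_deriv le_rfl
  have hf0 : ∀ x ≤ a, f x = 0 := fun x hx => by simp [hfdef, hagree x hx]
  have hfa : f a = 0 := hf0 a le_rfl
  -- generator linearity + positivity on (a,b)
  have key : ∀ x ∈ Ioo a b, gen δ σ ν f x = - gen δ σ ν g x := by
    intro x hx
    have hgd := hgdiff x hx; have hhd := hhdiff x hx
    have hx' : x ∈ Ico a b := ⟨le_of_lt hx.1, hx.2⟩
    have e1 : deriv f x = deriv h x - deriv g x := deriv_sub hhd.1 hgd.1
    have e2 : deriv (deriv f) x = deriv (deriv h) x - deriv (deriv g) x := by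
      have heq : deriv f =ᶠ[𝓝 x] fun z => deriv h z - deriv g z := by
        filter_upwards [isOpen_Ioo.mem_nhds hx] with z hz
        exact deriv_sub (hhdiff z hz).1 (hgdiff z hz).1
      rw [heq.deriv_eq]
      exact deriv_sub hhd.2 hgd.2
    have e3 : (∫ y in Iio (0:ℝ), (f (x + y) - f x) ∂ν)
        = (∫ y in Iio (0:ℝ), (h (x+y) - h x) ∂ν) - ∫ y in Iio (0:ℝ), (g (x+y) - g x) ∂ν := by
      rw [← integral_sub (hhint x hx') (hgint x hx')]
      refine integral_congr_ae (Eventually.of_forall fun y => ?_)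
      simp only [hfdef]; ring
    have hh0 := hharm x hx
    simp only [gen] at hh0 ⊢
    rw [e1, e2, e3]
    ring_nf
    ring_nf at hh0
    linarith [show (∫ y in Iio (0:ℝ), (-g x + g (x+y)) ∂ν) = ∫ y in Iio (0:ℝ), (g (x+y) - g x) ∂ν by simp_rw [neg_add_eq_sub]]
  have genf_pos : ∀ x ∈ Ioo a b, 0 < gen δ σ ν f x := by
    intro x hx
    rw [key x hx]
    exact neg_pos.mpr (hLgneg x ⟨hx.1.le, hx.2⟩)
  -- setup for the limit x ↓ a
  obtain ⟨L, hL⟩ := hf''lim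
  obtain ⟨M₀, hM₀⟩ := hfbdd
  set M := max M₀ 0 with hMdef
  have hM0 : 0 ≤ M := le_max_right _ _
  set m : ℝ := (a + b) / 2 with hmdef
  have ham : a < m := by simp only [hmdef]; linarith
  set x₁ : ℝ := min m (a + 1) with hx₁def
  have hax₁ : a < x₁ := lt_min ham (by linarith)
  have hx₁m : x₁ ≤ m := min_le_left _ _
  have hx₁1 : x₁ ≤ a + 1 := min_le_right _ _
  -- Lipschitz estimate on [a, x] for x < x₁
  have hlip : ∀ x ∈ Ioo a x₁, ∀ u ∈ Icc a x, ∀ v ∈ Icc a x, |f u - f v| ≤ M * |u - v| := by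
    intro x hx u hu v hv
    have hbound : ∀ z ∈ Icc a x, ‖deriv f z‖ ≤ M := by
      intro z hz
      rcases eq_or_lt_of_le hz.1 with rfl | hz'
      · simp [hf'a, hM0]
      · have : z ∈ Ioo a m := ⟨hz', lt_of_le_of_lt hz.2 (hx.2.trans_le hx₁m)⟩
        exact le_trans (le_of_eq (Real.norm_eq_abs _)) ((hM₀ z this).1.trans (le_max_left _ _))
    have := Convex.norm_image_sub_le_of_norm_deriv_le
      (fun z _ => hfdiff z) hbound (convex_Icc a x) hv hu
    simpa [Real.norm_eq_abs] using this
  -- the nonlocal term of gen f tends to 0 as x ↓ a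
  have hInt0 : Tendsto (fun x => ∫ y in Iio (0:ℝ), (f (x + y) - f x) ∂ν) (𝓝[>] a) (𝓝 0) := by
    have hDCT := MeasureTheory.tendsto_integral_filter_of_dominated_convergence
      (μ := ν.restrict (Iio 0)) (l := 𝓝[>] a)
      (F := fun x y => f (x + y) - f x) (f := fun _ => (0 : ℝ))
      (bound := fun y => M * min 1 |y|)
      (Eventually.of_forall fun x =>
        (((hfc.comp (continuous_const.add continuous_id)).sub continuous_const).aestronglyMeasurable))
      ?_ (hνint.const_mul M) ?_
    · simpa using hDCT
    · filter_upwards [Ioo_mem_nhdsGT_of_mem ⟨le_refl a, hax₁⟩] with x hx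
      rw [ae_restrict_iff' measurableSet_Iio]
      refine Eventually.of_forall fun y hy => ?_
      have hy0 : y < 0 := hy
      set u : ℝ := max a (x + y) with hudef
      have hu1 : u ∈ Icc a x := ⟨le_max_left _ _, max_le hx.1.le (by linarith)⟩
      have hfu : f u = f (x + y) := by
        rcases le_or_gt (x + y) a with hcase | hcase
        · rw [hudef, max_eq_left hcase, hfa, hf0 _ hcase]
        · rw [hudef, max_eq_right hcase.le]
      have hxu : x - u ≤ min 1 |y| := by
        have h1 : x - u ≤ 1 := by
          have : a ≤ u := le_max_left _ _
          have : x < a + 1 := hx.2.trans_le hx₁1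
          linarith [le_max_left a (x+y)]
        have h2 : x - u ≤ |y| := by
          rw [abs_of_neg hy0]
          linarith [le_max_right a (x+y)]
        exact le_min h1 h2
      calc ‖f (x + y) - f x‖ = |f u - f x| := by rw [Real.norm_eq_abs, hfu]
        _ ≤ M * |u - x| := hlip x hx u hu1 x ⟨hx.1.le, le_refl x⟩
        _ ≤ M * min 1 |y| := by
            refine mul_le_mul_of_nonneg_left ?_ hM0
            rw [abs_sub_comm, abs_of_nonneg (by linarith [hu1.2] : (0:ℝ) ≤ x - u)]
            exact hxu
    · rw [ae_restrict_iff' measurableSet_Iio]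
      refine Eventually.of_forall fun y hy => ?_
      have hy0 : y < 0 := hy
      have hcont : Continuous (fun x => f (x + y) - f x) :=
        (hfc.comp (continuous_id.add continuous_const)).sub hfc
      have h0 : f (a + y) - f a = 0 := by
        rw [hfa, hf0 _ (by linarith : a + y ≤ a)]; ring
      have := (hcont.tendsto a).mono_left (nhdsWithin_le_nhds (s := Ioi a))
      simpa [h0] using this
  -- gen f tends to σ²/2·L along 𝓝[>] a
  have hgenf_tendsto : Tendsto (fun x => gen δ σ ν f x) (𝓝[>] a) (𝓝 (σ^2/2 * L)) := by
    have t1 : Tendsto (fun x => δ * deriv f x) (𝓝[>] a) (𝓝 0) := by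
      have hc : Continuous (fun x => δ * deriv f x) := continuous_const.mul hf'c
      have := (hc.tendsto a).mono_left (nhdsWithin_le_nhds (s := Ioi a))
      simpa [hf'a] using this
    have t2 : Tendsto (fun x => σ^2/2 * deriv (deriv f) x) (𝓝[>] a) (𝓝 (σ^2/2 * L)) :=
      (tendsto_const_nhds.mul hL)
    have := (t1.add t2).add hInt0
    simp only [gen]
    simpa using this
  -- gen f = -gen g tends to -gen g a
  have hgen_g_tendsto : Tendsto (fun x => gen δ σ ν f x) (𝓝[>] a) (𝓝 (-gen δ σ ν g a)) := by
    have hcw : Tendsto (fun x => gen δ σ ν g x) (𝓝[Ico a b] a) (𝓝 (gen δ σ ν g a)) :=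
      hLgcont a ⟨le_refl a, hab⟩
    have hle : 𝓝[>] a ≤ 𝓝[Ico a b] a := by
      rw [← nhdsWithin_Ioo_eq_nhdsGT hab]
      exact nhdsWithin_mono a Ioo_subset_Ico_self
    have := (hcw.mono_left hle).neg
    refine this.congr' ?_
    filter_upwards [Ioo_mem_nhdsGT_of_mem ⟨le_refl a, hab⟩] with x hx
    exact (key x hx).symm
  have hLval : σ^2/2 * L = -gen δ σ ν g a := tendsto_nhds_unique hgenf_tendsto hgen_g_tendsto
  have hLpos : 0 < L := by
    have h1 : 0 < -gen δ σ ν g a := neg_pos.mpr (hLgneg a ⟨le_refl a, hab⟩)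
    nlinarith [sq_nonneg σ, hσ]
  -- f'' > 0 on some (a, u')
  obtain ⟨u, hu, huP⟩ := (mem_nhdsGT_iff_exists_Ioo_subset).1
    (hL.eventually (eventually_gt_nhds hLpos))
  set u' : ℝ := min u b with hu'def
  have hau' : a < u' := lt_min hu hab
  have hP : ∀ z ∈ Ioo a u', 0 < deriv (deriv f) z := fun z hz =>
    huP ⟨hz.1, hz.2.trans_le (min_le_left _ _)⟩
  have hmono' : StrictMonoOn (deriv f) (Ioo a u') :=
    strictMonoOn_of_deriv_pos (convex_Ioo a u') hf'c.continuousOn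
      (fun z hz => hP z (by rwa [interior_Ioo] at hz))
  have hf'tendsto : Tendsto (deriv f) (𝓝[>] a) (𝓝 0) := by
    have := (hf'c.tendsto a).mono_left (nhdsWithin_le_nhds (s := Ioi a))
    rwa [hf'a] at this
  have hf'posloc : ∀ z ∈ Ioo a u', 0 < deriv f z :=
    pos_on_of_strictMonoOn hf'tendsto hmono'
  -- main claim: f' > 0 everywhere on (a,b)
  have hf'pos : ∀ x ∈ Ioo a b, 0 < deriv f x := by
    by_contra hcon
    push_neg at hcon
    obtain ⟨x₀, hx₀, hx₀'⟩ := hcon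
    set w : ℝ := min u' x₀ with hwdef
    have haw : a < w := lt_min hau' hx₀.1
    set lo : ℝ := (a + w) / 2 with hlodef
    have hlo1 : a < lo := by simp only [hlodef]; linarith
    have hlo2 : lo < w := by simp only [hlodef]; linarith
    have hlou' : lo < u' := hlo2.trans_le (min_le_left _ _)
    have hlox₀ : lo < x₀ := hlo2.trans_le (min_le_right _ _)
    set T : Set ℝ := Icc lo x₀ ∩ deriv f ⁻¹' Iic 0 with hTdef
    have hTclosed : IsClosed T := isClosed_Icc.inter (isClosed_Iic.preimage hf'c)
    have hTne : T.Nonempty := ⟨x₀, ⟨hlox₀.le, le_refl _⟩, hx₀'⟩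
    have hTbdd : BddBelow T := ⟨lo, fun y hy => hy.1.1⟩
    set c : ℝ := sInf T with hcdef
    have hcT : c ∈ T := hTclosed.csInf_mem hTne hTbdd
    have hac : a < c := hlo1.trans_le hcT.1.1
    have hcIoo : c ∈ Ioo a b := ⟨hac, lt_of_le_of_lt hcT.1.2 hx₀.2⟩
    -- f' > 0 on (a,c)
    have hleft : ∀ z ∈ Ioo a c, 0 < deriv f z := by
      intro z hz
      rcases lt_or_ge z u' with hzu | hzu
      · exact hf'posloc z ⟨hz.1, hzu⟩
      · have hzlo : lo ≤ z := le_trans hlou'.le hzu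
        have hzT : z ∉ T := fun hmem => absurd (csInf_le hTbdd hmem) (not_le.mpr hz.2)
        have hzI : z ∈ Icc lo x₀ := ⟨hzlo, (hz.2.trans_le hcT.1.2).le⟩
        by_contra hzneg
        exact hzT ⟨hzI, le_of_not_gt hzneg⟩
    have hccl : c ∈ closure (Ioo a c) := by
      rw [closure_Ioo hac.ne]; exact ⟨hac.le, le_refl c⟩
    haveI hne : (𝓝[Ioo a c] c).NeBot := mem_closure_iff_nhdsWithin_neBot.1 hccl
    -- f'(c) = 0
    have hf'c0 : deriv f c = 0 := by
      refine le_antisymm hcT.2 ?_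
      have hlim : Tendsto (deriv f) (𝓝[Ioo a c] c) (𝓝 (deriv f c)) :=
        (hf'c.tendsto c).mono_left nhdsWithin_le_nhds
      refine ge_of_tendsto hlim ?_
      filter_upwards [self_mem_nhdsWithin] with z hz
      exact (hleft z hz).le
    -- second derivative at c is ≤ 0
    have hD0 : deriv (deriv f) c ≤ 0 := by
      have hDW : HasDerivWithinAt (deriv f) (deriv (deriv f) c) (Ioo a c) c :=
        ((hf2 c hcIoo).hasDerivAt).hasDerivWithinAt
      have hslope := hasDerivWithinAt_iff_tendsto_slope.1 hDW
      have hIset : Ioo a c \ {c} = Ioo a c :=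
        diff_singleton_eq_self (fun hc => lt_irrefl c hc.2)
      rw [hIset] at hslope
      refine le_of_tendsto hslope ?_
      filter_upwards [self_mem_nhdsWithin] with z hz
      have : slope (deriv f) c z = deriv f z / (z - c) := by
        rw [slope_def_field, hf'c0, sub_zero]
      rw [this]
      exact div_nonpos_of_nonneg_of_nonpos (hleft z hz).le (by linarith [hz.2])
    -- f strictly increasing on [a,c]
    have hfmono : StrictMonoOn f (Icc a c) :=
      strictMonoOn_of_deriv_pos (convex_Icc a c) hfc.continuousOn
        (fun z hz => hleft z (by rwa [interior_Icc] at hz))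
    have hfcpos : 0 ≤ f c := by
      have := hfmono ⟨le_refl a, hac.le⟩ ⟨hac.le, le_refl c⟩ hac
      rw [hfa] at this; exact this.le
    -- nonlocal term at c is ≤ 0
    have hIneg : (∫ y in Iio (0:ℝ), (f (c + y) - f c) ∂ν) ≤ 0 := by
      refine integral_nonpos_of_ae ?_
      have hae : ∀ᵐ y ∂ν.restrict (Iio (0:ℝ)), f (c + y) - f c ≤ 0 := by
        rw [ae_restrict_iff' measurableSet_Iio]
        refine Eventually.of_forall fun y hy => ?_
        have hy0 : y < 0 := hy
        rcases le_or_gt (c + y) a with hcase | hcase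
        · have h0' : f (c + y) = 0 := hf0 _ hcase
          rw [h0']; linarith
        · have hlt : f (c + y) < f c :=
            hfmono ⟨hcase.le, by linarith⟩ ⟨hac.le, le_refl c⟩ (by linarith)
          linarith
      exact hae
    -- contradiction
    have hpos := genf_pos c hcIoo
    have hσ2 : 0 < σ^2/2 := by positivity
    simp only [gen] at hpos
    rw [hf'c0] at hpos
    nlinarith [hD0, hIneg, hσ2, hpos]
  -- conclusion
  have hmono : StrictMonoOn f (Ioo a b) :=
    strictMonoOn_of_deriv_pos (convex_Ioo a b) hfc.continuousOn
      (fun z hz => hf'pos z (by rwa [interior_Ioo] at hz))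
  have hft : Tendsto f (𝓝[>] a) (𝓝 0) := by
    have := (hfc.tendsto a).mono_left (nhdsWithin_le_nhds (s := Ioi a))
    rwa [hfa] at this
  refine ⟨hmono, fun x hx => ?_⟩
  have hx' := pos_on_of_strictMonoOn hft hmono x hx
  exact sub_pos.mp hx'
end

section
/- Lemma 5.4 of the paper (the right smooth Gerber–Shiu continuation lies strictly below g on a subharmonic interval). Let ℓ < r and let g, h : ℝ → ℝ be continuous with h(x) = g(x) for all x ≤ ℓ. Set s := g − h. Assume either (bounded variation case) σ = 0 and δ > 0, with s continuously differentiable on (ℓ,r), s′ bounded on (ℓ,(ℓ+r)/2), and lim_{x↓ℓ} s′(x) existing; or (unbounded variation case) σ > 0 with the right smooth-fit condition h′(ℓ+) = g′(ℓ+) (so that s is continuously differentiable on ℝ with s = 0 on (−∞,ℓ] and s′(ℓ) = 0), s twice continuously differentiable on (ℓ,r) with lim_{x↓ℓ} s″(x) existing and s′, s″ bounded near ℓ. Assume for every x ∈ [ℓ,r) that y ↦ g(x+y) − g(x) and y ↦ h(x+y) − h(x) are Π-integrable, that ℒh(x) = 0 for all x ∈ (ℓ,r), and that x ↦ ℒg(x)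 is continuous on [ℓ,r) with ℒg(x) > 0 for all x ∈ [ℓ,r). Then s = g − h is strictly increasing on (ℓ,r); in particular h(x) < g(x) for all x ∈ (ℓ,r). -/
open MeasureTheory Set Filter Topology


lemma tendsto_jump_integral (ν : Measure ℝ)
    (hνint : IntegrableOn (fun y => min 1 |y|) (Iio (0 : ℝ)) ν)
    (ℓ ε M : ℝ) (s : ℝ → ℝ) (hsc : Continuous s) (hs0 : ∀ x ≤ ℓ, s x = 0)
    (hε : 0 < ε)
    (hlip : ∀ w z, ℓ ≤ w → w ≤ z → z ≤ ℓ + ε → |s z - s w| ≤ M * (z - w)) :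
    Tendsto (fun x => ∫ y in Iio (0:ℝ), (s (x + y) - s x) ∂ν) (𝓝[>] ℓ) (𝓝 0) := by
  have hM : 0 ≤ M := by
    have h1 := hlip ℓ (ℓ + ε) le_rfl (by linarith) le_rfl
    have h2 := abs_nonneg (s (ℓ + ε) - s ℓ)
    nlinarith
  set ε' := min ε 1 with hε'def
  have hε'pos : 0 < ε' := lt_min hε one_pos
  have hε'le : ε' ≤ ε := min_le_left _ _
  have hε'1 : ε' ≤ 1 := min_le_right _ _
  have habs : ∀ z, ℓ ≤ z → z ≤ ℓ + ε → |s z| ≤ M * (z - ℓ) := by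
    intro z h1 h2
    have := hlip ℓ z le_rfl h1 h2
    simpa [hs0 ℓ le_rfl] using this
  have key := MeasureTheory.tendsto_integral_filter_of_dominated_convergence
    (μ := ν.restrict (Iio 0)) (l := 𝓝[>] ℓ)
    (F := fun x y => s (x + y) - s x) (f := fun _ => (0:ℝ))
    (bound := fun y => 2 * M * min 1 |y|)
    (Eventually.of_forall fun x =>
      (((hsc.comp (continuous_const.add continuous_id)).sub continuous_const).aestronglyMeasurable))
    ?_ (hνint.const_mul (2 * M)) ?_
  · simpa using key
  · filter_upwards [Ioo_mem_nhdsGT_of_mem (Set.left_mem_Ico.2 (by linarith : ℓ < ℓ + ε'))] with x hx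
    refine (ae_restrict_iff' measurableSet_Iio).2 (ae_of_all _ fun y hy => ?_)
    have hy' : y < 0 := hy
    have hyabs : |y| = -y := abs_of_neg hy'
    have hmin0 : (0:ℝ) ≤ min 1 |y| := le_min zero_le_one (abs_nonneg y)
    rw [Real.norm_eq_abs]
    rcases le_or_gt ℓ (x + y) with hcase | hcase
    · have h1 : |s x - s (x + y)| ≤ M * (x - (x + y)) :=
        hlip (x + y) x hcase (by linarith) (by linarith [hx.2, hε'le])
      have h2 : |s (x + y)| ≤ M * (x + y - ℓ) := habs _ hcase (by linarith [hx.2, hε'le])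
      have h3 : |s x| ≤ M * (x - ℓ) := habs _ (le_of_lt hx.1) (by linarith [hx.2, hε'le])
      rcases le_or_gt (|y|) 1 with h4 | h4
      · have hmin : min 1 |y| = |y| := min_eq_right h4
        rw [hmin, abs_sub_comm]
        have : M * (x - (x + y)) = M * |y| := by rw [hyabs]; ring
        rw [this] at h1
        nlinarith [abs_nonneg y]
      · have hmin : min 1 |y| = 1 := min_eq_left (le_of_lt h4)
        rw [hmin]
        have h5 := abs_sub (s (x + y)) (s x)
        have h6 : x - ℓ ≤ ε' := by linarith [hx.2]
        have h7 := abs_sub_abs_le_abs_sub (s (x+y)) (s x)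
        calc |s (x + y) - s x| ≤ |s (x+y)| + |s x| := abs_sub _ _
          _ ≤ M * (x + y - ℓ) + M * (x - ℓ) := add_le_add h2 h3
          _ ≤ 2 * M * 1 := by nlinarith
    · have hz : s (x + y) = 0 := hs0 _ (le_of_lt hcase)
      rw [hz, zero_sub, abs_neg]
      have h3 : |s x| ≤ M * (x - ℓ) := habs _ (le_of_lt hx.1) (by linarith [hx.2, hε'le])
      have h6 : x - ℓ ≤ min 1 |y| := by
        refine le_min (by linarith [hx.2]) ?_
        rw [hyabs]; linarith
      nlinarith
  · refine (ae_restrict_iff' measurableSet_Iio).2 (ae_of_all _ fun y hy => ?_)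
    have hy' : y < 0 := hy
    have t1 : Tendsto (fun x => s (x + y) - s x) (𝓝 ℓ) (𝓝 (s (ℓ + y) - s ℓ)) :=
      ((hsc.comp (continuous_id.add continuous_const)).tendsto ℓ).sub (hsc.tendsto ℓ)
    have : s (ℓ + y) - s ℓ = 0 := by
      rw [hs0 _ (by linarith), hs0 ℓ le_rfl]; ring
    rw [this] at t1
    exact t1.mono_left nhdsWithin_le_nhds


/-- Lemma 5.4 (the right smooth Gerber–Shiu continuation lies strictly below
`g` on a strictly subharmonic interval): if `h` agrees with `g` on `(-∞,ℓ]`,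
is harmonic on `(ℓ,r)` while `ℒg > 0` on `[ℓ,r)`, then `s := g - h` is strictly
increasing on `(ℓ,r)`; in particular `h < g` on `(ℓ,r)`. -/
theorem stmt8
    (δ σ : ℝ) (hσ : 0 ≤ σ)
    (ν : Measure ℝ) (hν0 : ν ≠ 0) (hνsupp : ν (Ici (0 : ℝ)) = 0)
    (hνint : IntegrableOn (fun y => min 1 |y|) (Iio (0 : ℝ)) ν)
    (ℓ r : ℝ) (hlr : ℓ < r) (g h : ℝ → ℝ)
    (hgc : Continuous g) (hhc : Continuous h)
    (hagree : ∀ x ≤ ℓ, h x = g x)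
    (hgdiff : ∀ x ∈ Ioo ℓ r, DifferentiableAt ℝ g x ∧ DifferentiableAt ℝ (deriv g) x)
    (hhdiff : ∀ x ∈ Ioo ℓ r, DifferentiableAt ℝ h x ∧ DifferentiableAt ℝ (deriv h) x)
    (hgint : ∀ x ∈ Ico ℓ r, IntegrableOn (fun y => g (x + y) - g x) (Iio (0 : ℝ)) ν)
    (hhint : ∀ x ∈ Ico ℓ r, IntegrableOn (fun y => h (x + y) - h x) (Iio (0 : ℝ)) ν)
    (hharm : ∀ x ∈ Ioo ℓ r, gen δ σ ν h x = 0)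
    (hLgcont : ContinuousOn (fun x => gen δ σ ν g x) (Ico ℓ r))
    (hLgpos : ∀ x ∈ Ico ℓ r, 0 < gen δ σ ν g x)
    (hcase :
      (σ = 0 ∧ 0 < δ ∧
        ContinuousOn (deriv (fun z => g z - h z)) (Ioo ℓ r) ∧
        (∃ M, ∀ x ∈ Ioo ℓ ((ℓ + r) / 2), |deriv (fun z => g z - h z) x| ≤ M) ∧
        (∃ L, Tendsto (deriv (fun z => g z - h z)) (𝓝[>] ℓ) (𝓝 L)))
      ∨
      (0 < σ ∧ (∀ x, DifferentiableAt ℝ (fun z => g z - h z) x) ∧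
        Continuous (deriv (fun z => g z - h z)) ∧
        deriv (fun z => g z - h z) ℓ = 0 ∧
        (∀ x ∈ Ioo ℓ r, DifferentiableAt ℝ (deriv (fun z => g z - h z)) x) ∧
        ContinuousOn (deriv (deriv (fun z => g z - h z))) (Ioo ℓ r) ∧
        (∃ L, Tendsto (deriv (deriv (fun z => g z - h z))) (𝓝[>] ℓ) (𝓝 L)) ∧
        (∃ ε > (0 : ℝ), ∃ M, ∀ x ∈ Ioo ℓ (ℓ + ε),
          |deriv (fun z => g z - h z) x| ≤ M ∧
          |deriv (deriv (fun z => g z - h z)) x| ≤ M))) :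
    StrictMonoOn (fun z => g z - h z) (Ioo ℓ r) ∧ ∀ x ∈ Ioo ℓ r, h x < g x := by
  set s : ℝ → ℝ := fun z => g z - h z with hs_def
  -- basic facts
  have hs0 : ∀ x ≤ ℓ, s x = 0 := fun x hx => by simp [hs_def, hagree x hx]
  have hsc : Continuous s := hgc.sub hhc
  have hsdiff : ∀ x ∈ Ioo ℓ r, DifferentiableAt ℝ s x :=
    fun x hx => ((hgdiff x hx).1.sub (hhdiff x hx).1)
  have hderiv_eq : ∀ x ∈ Ioo ℓ r, deriv s x = deriv g x - deriv h x :=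
    fun x hx => deriv_sub (hgdiff x hx).1 (hhdiff x hx).1
  have hderiv2_eq : ∀ x ∈ Ioo ℓ r, deriv (deriv s) x = deriv (deriv g) x - deriv (deriv h) x := by
    intro x hx
    have hev : deriv s =ᶠ[𝓝 x] fun z => deriv g z - deriv h z := by
      filter_upwards [isOpen_Ioo.mem_nhds hx] with z hz using hderiv_eq z hz
    rw [hev.deriv_eq]
    exact deriv_sub (hgdiff x hx).2 (hhdiff x hx).2
  have hsint : ∀ x ∈ Ico ℓ r, IntegrableOn (fun y => s (x + y) - s x) (Iio (0:ℝ)) ν := by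
    intro x hx
    have : (fun y => s (x + y) - s x) =
        fun y => (g (x + y) - g x) - (h (x + y) - h x) := by
      funext y; simp only [hs_def]; ring
    rw [this]
    exact (hgint x hx).sub (hhint x hx)
  -- key generator identity : ℒ s = ℒ g on (ℓ, r)
  have hkey : ∀ x ∈ Ioo ℓ r,
      δ * deriv s x + σ ^ 2 / 2 * deriv (deriv s) x
        + (∫ y in Iio (0:ℝ), (s (x + y) - s x) ∂ν) = gen δ σ ν g x := by
    intro x hx
    have hx' : x ∈ Ico ℓ r := ⟨le_of_lt hx.1, hx.2⟩
    have hintsub : (∫ y in Iio (0:ℝ), (s (x + y) - s x) ∂ν)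
        = (∫ y in Iio (0:ℝ), (g (x + y) - g x) ∂ν)
          - ∫ y in Iio (0:ℝ), (h (x + y) - h x) ∂ν := by
      rw [← integral_sub (hgint x hx') (hhint x hx')]
      congr 1; funext y; simp only [hs_def]; ring
    have hh0 := hharm x hx
    simp only [gen] at hh0 ⊢
    rw [hderiv_eq x hx, hderiv2_eq x hx, hintsub]
    linarith
  -- continuity of ℒ g at ℓ from the right
  have hA : Tendsto (fun x => gen δ σ ν g x) (𝓝[>] ℓ) (𝓝 (gen δ σ ν g ℓ)) := by
    have c1 : ContinuousWithinAt (fun x => gen δ σ ν g x) (Ico ℓ r) ℓ :=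
      hLgcont ℓ ⟨le_rfl, hlr⟩
    refine c1.tendsto.mono_left ?_
    rw [← nhdsWithin_Ioo_eq_nhdsGT hlr]
    exact nhdsWithin_mono _ Ioo_subset_Ico_self
  have hApos : 0 < gen δ σ ν g ℓ := hLgpos ℓ ⟨le_rfl, hlr⟩
  have hIoo_mem : Ioo ℓ r ∈ 𝓝[>] ℓ := Ioo_mem_nhdsGT_of_mem ⟨le_rfl, hlr⟩
  -- Lipschitz bound from a derivative bound, via MVT
  have mvtlip : ∀ (c M : ℝ), c ≤ r → (∀ x ∈ Ioo ℓ c, |deriv s x| ≤ M) →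
      ∀ w z, ℓ ≤ w → w ≤ z → z ≤ c → |s z - s w| ≤ M * (z - w) := by
    intro c M hcr hM w z hw hwz hz
    rcases eq_or_lt_of_le hwz with rfl | hwz'
    · simp
    · obtain ⟨y0, hy0, hslope⟩ := exists_deriv_eq_slope s hwz' (hsc.continuousOn)
        (fun t ht => (hsdiff t ⟨lt_of_le_of_lt hw ht.1,
          lt_of_lt_of_le ht.2 (le_trans hz hcr)⟩).differentiableWithinAt)
      have heq : s z - s w = deriv s y0 * (z - w) := by
        rw [hslope, div_mul_cancel₀ _ (by intro h0; apply absurd h0; intro h0'; linarith : z - w ≠ 0)]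
      rw [heq, abs_mul, abs_of_nonneg (by linarith : (0:ℝ) ≤ z - w)]
      exact mul_le_mul_of_nonneg_right
        (hM y0 ⟨lt_of_le_of_lt hw hy0.1, lt_of_lt_of_le hy0.2 hz⟩) (by linarith)
  -- the case-dependent bundle
  have bundle : (∃ a, ℓ < a ∧ a ≤ r ∧ ∀ x ∈ Ioo ℓ a, 0 < deriv s x) ∧
      ContinuousOn (deriv s) (Ioo ℓ r) ∧
      (∀ m ∈ Ioo ℓ r, deriv s m = 0 → (∀ x ∈ Ioo ℓ m, 0 < deriv s x) →
        σ ^ 2 / 2 * deriv (deriv s) m ≤ 0) := by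
    rcases hcase with ⟨hσ0, hδ, hs'cont, ⟨M, hMbd⟩, -⟩ |
      ⟨hσpos, hsdiff', hs'c, hs'ℓ, hs'diff, hs''cont, -, ⟨ε0, hε0, M, hMbd⟩⟩
    · -- bounded variation case
      have hmid : ℓ + (r - ℓ) / 2 = (ℓ + r) / 2 := by ring
      have hlip : ∀ w z, ℓ ≤ w → w ≤ z → z ≤ ℓ + (r - ℓ) / 2 → |s z - s w| ≤ M * (z - w) := by
        refine mvtlip (ℓ + (r - ℓ) / 2) M (by linarith) ?_
        intro x hx
        exact hMbd x (by rw [hmid] at hx; exact hx)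
      have hT0 := tendsto_jump_integral ν hνint ℓ ((r - ℓ) / 2) M s hsc hs0 (by linarith) hlip
      have hδ' : δ ≠ 0 := ne_of_gt hδ
      have hev : ∀ᶠ x in 𝓝[>] ℓ, deriv s x
          = (gen δ σ ν g x - ∫ y in Iio (0:ℝ), (s (x + y) - s x) ∂ν) / δ := by
        filter_upwards [hIoo_mem] with x hx
        have hk := hkey x hx
        have hz : σ ^ 2 / 2 * deriv (deriv s) x = 0 := by rw [hσ0]; ring
        field_simp
        linear_combination hk - hz
      have htend : Tendsto (deriv s) (𝓝[>] ℓ) (𝓝 ((gen δ σ ν g ℓ - 0) / δ)) :=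
        Tendsto.congr' (hev.mono fun x hx => hx.symm) ((hA.sub hT0).div_const δ)
      have hposlim : 0 < (gen δ σ ν g ℓ - 0) / δ := by
        rw [sub_zero]; positivity
      have hevpos : ∀ᶠ x in 𝓝[>] ℓ, 0 < deriv s x :=
        htend.eventually (eventually_gt_nhds hposlim)
      obtain ⟨u, hu, hsub⟩ := mem_nhdsGT_iff_exists_Ioo_subset.1 hevpos
      refine ⟨⟨min u r, lt_min hu hlr, min_le_right _ _,
        fun x hx => hsub ⟨hx.1, lt_of_lt_of_le hx.2 (min_le_left _ _)⟩⟩, hs'cont, ?_⟩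
      intro m hm _ _
      rw [hσ0]; norm_num
    · -- unbounded variation case
      have hσ2 : (σ:ℝ) ^ 2 ≠ 0 := by positivity
      set ε1 := min ε0 (r - ℓ) with hε1def
      have hε1pos : 0 < ε1 := lt_min hε0 (by linarith)
      have hε1le : ε1 ≤ ε0 := min_le_left _ _
      have hε1r : ℓ + ε1 ≤ r := by
        have := min_le_right ε0 (r - ℓ); simp only [hε1def]; linarith
      have hMbd' : ∀ x ∈ Ioo ℓ (ℓ + ε1), |deriv s x| ≤ M :=
        fun x hx => (hMbd x ⟨hx.1, lt_of_lt_of_le hx.2 (by linarith)⟩).1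
      have hlip := mvtlip (ℓ + ε1) M hε1r hMbd'
      have hT0 := tendsto_jump_integral ν hνint ℓ ε1 M s hsc hs0 hε1pos hlip
      have hs'tend : Tendsto (deriv s) (𝓝[>] ℓ) (𝓝 0) := by
        have := (hs'c.tendsto ℓ).mono_left (nhdsWithin_le_nhds : 𝓝[>] ℓ ≤ 𝓝 ℓ)
        rwa [hs'ℓ] at this
      have hev : ∀ᶠ x in 𝓝[>] ℓ, deriv (deriv s) x
          = (gen δ σ ν g x - (∫ y in Iio (0:ℝ), (s (x + y) - s x) ∂ν)
              - δ * deriv s x) * (2 / σ ^ 2) := by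
        filter_upwards [hIoo_mem] with x hx
        have hk := hkey x hx
        have hgoal : gen δ σ ν g x - (∫ y in Iio (0:ℝ), (s (x + y) - s x) ∂ν)
            - δ * deriv s x = σ ^ 2 / 2 * deriv (deriv s) x := by linarith
        rw [hgoal]
        field_simp
      have htend : Tendsto (deriv (deriv s)) (𝓝[>] ℓ)
          (𝓝 ((gen δ σ ν g ℓ - 0 - δ * 0) * (2 / σ ^ 2))) := by
        refine Tendsto.congr' (hev.mono fun x hx => hx.symm) ?_
        exact ((hA.sub hT0).sub (hs'tend.const_mul δ)).mul_const _
      have hposlim : 0 < (gen δ σ ν g ℓ - 0 - δ * 0) * (2 / σ ^ 2) := by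
        have heq : gen δ σ ν g ℓ - 0 - δ * 0 = gen δ σ ν g ℓ := by ring
        rw [heq]; positivity
      have hevpos : ∀ᶠ x in 𝓝[>] ℓ, 0 < deriv (deriv s) x :=
        htend.eventually (eventually_gt_nhds hposlim)
      obtain ⟨u, hu, hsub⟩ := mem_nhdsGT_iff_exists_Ioo_subset.1 hevpos
      refine ⟨⟨min u r, lt_min hu hlr, min_le_right _ _, ?_⟩, hs'c.continuousOn, ?_⟩
      · intro x hx
        have hxr : x < r := lt_of_lt_of_le hx.2 (min_le_right _ _)
        obtain ⟨c0, hc0, hsl⟩ := exists_deriv_eq_slope (deriv s) hx.1 hs'c.continuousOn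
          (fun t ht => (hs'diff t ⟨ht.1, lt_trans ht.2 hxr⟩).differentiableWithinAt)
        have hdd : 0 < deriv (deriv s) c0 :=
          hsub ⟨hc0.1, lt_trans hc0.2 (lt_of_lt_of_le hx.2 (min_le_left _ _))⟩
        rw [hs'ℓ, sub_zero] at hsl
        have hxl : (0:ℝ) < x - ℓ := by linarith [hx.1]
        have hds : deriv s x = deriv (deriv s) c0 * (x - ℓ) := by
          rw [hsl, div_mul_cancel₀ _ (ne_of_gt hxl)]
        rw [hds]; positivity
      · intro m hm hs'm hltm
        have hd : HasDerivAt (deriv s) (deriv (deriv s) m) m := (hs'diff m hm).hasDerivAt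
        have hslope := hasDerivAt_iff_tendsto_slope.1 hd
        have hmono : (𝓝[<] m) ≤ 𝓝[≠] m := nhdsWithin_mono _ fun x hx => ne_of_lt hx
        have hdd0 : deriv (deriv s) m ≤ 0 := by
          refine le_of_tendsto (hslope.mono_left hmono) ?_
          filter_upwards [Ioo_mem_nhdsLT_of_mem (⟨hm.1, le_rfl⟩ : m ∈ Ioc ℓ m)] with x hx
          rw [slope_def_field, hs'm, sub_zero]
          exact div_nonpos_iff.mpr (Or.inl ⟨le_of_lt (hltm x hx), by linarith [hx.2]⟩)
        have hσ22 : (0:ℝ) ≤ σ ^ 2 / 2 := by positivity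
        exact mul_nonpos_iff.mpr (Or.inl ⟨hσ22, hdd0⟩)
  obtain ⟨⟨a, hla, har, hapos⟩, hs'cont, hR⟩ := bundle
  -- positivity of deriv s on all of (ℓ, r)
  have hpos : ∀ x ∈ Ioo ℓ r, 0 < deriv s x := by
    by_contra hcon
    push_neg at hcon
    obtain ⟨x₀, hx₀, hx₀le⟩ := hcon
    set a' := (ℓ + min a x₀) / 2 with ha'def
    have hmin : ℓ < min a x₀ := lt_min hla hx₀.1
    have hla' : ℓ < a' := by simp only [ha'def]; linarith
    have ha'min : a' < min a x₀ := by simp only [ha'def]; linarith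
    have ha'a : a' < a := lt_of_lt_of_le ha'min (min_le_left _ _)
    have ha'x₀ : a' < x₀ := lt_of_lt_of_le ha'min (min_le_right _ _)
    have ha'pos : 0 < deriv s a' := hapos a' ⟨hla', ha'a⟩
    set K := Icc a' x₀ ∩ (deriv s) ⁻¹' (Iic 0) with hKdef
    have hKsub : Icc a' x₀ ⊆ Ioo ℓ r :=
      fun t ht => ⟨lt_of_lt_of_le hla' ht.1, lt_of_le_of_lt ht.2 hx₀.2⟩
    have hKclosed : IsClosed K :=
      (hs'cont.mono hKsub).preimage_isClosed_of_isClosed isClosed_Icc isClosed_Iic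
    have hKne : K.Nonempty := ⟨x₀, ⟨le_of_lt ha'x₀, le_rfl⟩, hx₀le⟩
    have hKbdd : BddBelow K := ⟨a', fun t ht => ht.1.1⟩
    set m := sInf K with hmdef
    have hmK : m ∈ K := hKclosed.csInf_mem hKne hKbdd
    have hma' : a' ≤ m := hmK.1.1
    have hmx₀ : m ≤ x₀ := hmK.1.2
    have hm : m ∈ Ioo ℓ r := hKsub hmK.1
    have hm'le : deriv s m ≤ 0 := hmK.2
    have hma'lt : a' < m := by
      rcases eq_or_lt_of_le hma' with heq | hlt
      · exfalso; rw [← heq] at hm'le; linarith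
      · exact hlt
    have hltm : ∀ x ∈ Ioo ℓ m, 0 < deriv s x := by
      intro x hx
      rcases lt_or_ge x a' with hxa' | hxa'
      · exact hapos x ⟨hx.1, lt_trans hxa' ha'a⟩
      · by_contra hle
        push_neg at hle
        have hxK : x ∈ K := ⟨⟨hxa', le_trans (le_of_lt hx.2) hmx₀⟩, hle⟩
        exact absurd (csInf_le hKbdd hxK) (not_le.2 hx.2)
    have hs'm : deriv s m = 0 := by
      refine le_antisymm hm'le ?_
      have hcw : ContinuousWithinAt (deriv s) (Ioo ℓ r) m := hs'cont m hm
      have hle : 𝓝[<] m ≤ 𝓝[Ioo ℓ r] m := by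
        rw [← nhdsWithin_Ioo_eq_nhdsLT hm.1]
        exact nhdsWithin_mono _ (fun t ht => ⟨ht.1, lt_trans ht.2 hm.2⟩)
      refine ge_of_tendsto (hcw.tendsto.mono_left hle) ?_
      filter_upwards [Ioo_mem_nhdsLT_of_mem (⟨hm.1, le_rfl⟩ : m ∈ Ioc ℓ m)] with x hx
      exact le_of_lt (hltm x hx)
    have hmonoIcc : StrictMonoOn s (Icc ℓ m) := by
      refine strictMonoOn_of_deriv_pos (convex_Icc ℓ m) hsc.continuousOn ?_
      rw [interior_Icc]; exact hltm
    have hslm : s ℓ < s m :=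
      hmonoIcc ⟨le_rfl, le_of_lt hm.1⟩ ⟨le_of_lt hm.1, le_rfl⟩ hm.1
    have hmax : ∀ z < m, s z ≤ s m := by
      intro z hz
      rcases le_or_gt z ℓ with hzl | hzl
      · rw [hs0 z hzl, ← hs0 ℓ le_rfl]
        exact le_of_lt hslm
      · exact le_of_lt
          (hmonoIcc ⟨le_of_lt hzl, le_of_lt hz⟩ ⟨le_of_lt hm.1, le_rfl⟩ hz)
    have hT : (∫ y in Iio (0:ℝ), (s (m + y) - s m) ∂ν) ≤ 0 := by
      refine integral_nonpos_of_ae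
        ((ae_restrict_iff' measurableSet_Iio).2 (ae_of_all _ fun y hy => ?_))
      have hy' : y < 0 := hy
      have h1 : m + y < m := by linarith
      have h2 := hmax (m + y) h1
      show s (m + y) - s m ≤ 0
      linarith
    have hR' := hR m hm hs'm hltm
    have hk := hkey m hm
    have hG := hLgpos m ⟨le_of_lt hm.1, hm.2⟩
    rw [hs'm] at hk
    linarith
  -- conclusion
  constructor
  · exact strictMonoOn_of_deriv_pos (convex_Ioo ℓ r) hsc.continuousOn
      (by rwa [interior_Ioo])
  · intro x hx
    have hmono : StrictMonoOn s (Icc ℓ x) := by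
      refine strictMonoOn_of_deriv_pos (convex_Icc ℓ x) hsc.continuousOn ?_
      rw [interior_Icc]
      intro t ht
      exact hpos t ⟨ht.1, lt_trans ht.2 hx.2⟩
    have : s ℓ < s x := hmono ⟨le_rfl, le_of_lt hx.1⟩ ⟨le_of_lt hx.1, le_rfl⟩ hx.1
    rw [hs0 ℓ le_rfl] at this
    simpa [hs_def, sub_pos] using this
end

section
/- Superharmonicity of the reward at the fit point of a harmonic majorant (Lemma 5.9 of the paper, bounded variation case, stated analytically). Assume σ = 0 and δ > 0, and assume ∫_{(−∞,0)} |y| Π(dy) < ∞. Let a ∈ ℝ and let g, u : ℝ → ℝ be Lipschitz continuous on ℝ and satisfy: u(x) = g(x) for all x ≤ a; u(x) ≥ g(x) for all x ∈ ℝ; g is differentiable at a; u is differentiable on (a,∞) and u′(a+) := lim_{x↓a} u′(x) exists; and ℒu(x) = δ u′(x) + ∫_{(−∞,0)}(u(x+y) − u(x)) Π(dy) = 0 for all x ∈ (a,∞). Then ℒg(a) = δ g′(a) + ∫_{(−∞,0)}(g(a+y) − g(a)) Π(dy) ≤ 0. -/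
open MeasureTheory Set Filter Topology

/-- Generator of a spectrally negative Lévy process of bounded variation
(`σ = 0`) with drift `δ` and Lévy measure `ν` concentrated on `(-∞,0)`:
`ℒf(x) = δ f'(x) + ∫_{(-∞,0)} (f(x+y) - f(x)) ν(dy)`. -/
noncomputable def genBV (δ : ℝ) (ν : Measure ℝ) (f : ℝ → ℝ) (x : ℝ) : ℝ :=
  δ * deriv f x + ∫ y in Iio (0 : ℝ), (f (x + y) - f x) ∂ν

/-- Superharmonicity of the reward at the fit point of a harmonic majorant
(Lemma 5.9, bounded variation case): if `u` agrees with `g` on `(-∞,a]`,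
majorizes `g`, and is harmonic on `(a,∞)`, then `ℒg(a) ≤ 0`. -/
theorem stmt9
    (δ : ℝ) (hδ : 0 < δ)
    (ν : Measure ℝ) (hν0 : ν ≠ 0) (hνsupp : ν (Ici (0 : ℝ)) = 0)
    (hνint : IntegrableOn (fun y => |y|) (Iio (0 : ℝ)) ν)
    (a : ℝ) (g u : ℝ → ℝ)
    (hgLip : ∃ K, LipschitzWith K g) (huLip : ∃ K, LipschitzWith K u)
    (hagree : ∀ x ≤ a, u x = g x)
    (hmaj : ∀ x, g x ≤ u x)
    (hgdiff : DifferentiableAt ℝ g a)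
    (hudiff : ∀ x ∈ Ioi a, DifferentiableAt ℝ u x)
    (hu'lim : ∃ L, Tendsto (deriv u) (𝓝[>] a) (𝓝 L))
    (hharm : ∀ x ∈ Ioi a, genBV δ ν u x = 0) :
    genBV δ ν g a ≤ 0 := by
  obtain ⟨L, hL⟩ := hu'lim
  obtain ⟨Ku, hKu⟩ := huLip
  have hucont : Continuous u := hKu.continuous
  -- the integrals for `u` at `a` and `g` at `a` coincide
  have hua : u a = g a := hagree a le_rfl
  have hint_eq : (∫ y in Iio (0 : ℝ), (u (a + y) - u a) ∂ν)
      = ∫ y in Iio (0 : ℝ), (g (a + y) - g a) ∂ν := by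
    refine setIntegral_congr_fun measurableSet_Iio (fun y hy => ?_)
    have : a + y ≤ a := by simp only [mem_Iio] at hy; linarith
    rw [hagree _ this, hua]
  -- dominated convergence : the integral part of `genBV u x` converges as `x ↓ a`
  have hIconv : Tendsto (fun x => ∫ y in Iio (0 : ℝ), (u (x + y) - u x) ∂ν) (𝓝[>] a)
      (𝓝 (∫ y in Iio (0 : ℝ), (u (a + y) - u a) ∂ν)) := by
    refine tendsto_integral_filter_of_dominated_convergence (fun y => (Ku : ℝ) * |y|)
      ?_ ?_ ?_ ?_
    · filter_upwards with x
      exact ((hucont.comp (continuous_const.add continuous_id)).sub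
        continuous_const).aestronglyMeasurable.restrict
    · filter_upwards with x
      filter_upwards with y
      have := hKu.dist_le_mul (x + y) x
      simpa [Real.dist_eq, abs_sub_comm, add_sub_cancel_left] using this
    · exact hνint.const_mul _
    · filter_upwards with y
      have h1 : Tendsto (fun x : ℝ => x + y) (𝓝[>] a) (𝓝 (a + y)) :=
        ((continuous_id.add continuous_const).tendsto a).mono_left nhdsWithin_le_nhds
      exact ((hucont.tendsto (a + y)).comp h1).sub
        ((hucont.tendsto a).mono_left nhdsWithin_le_nhds)
  -- `genBV u x → δ L + ∫ (u(a+y)-u(a))`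
  have hgen : Tendsto (fun x => genBV δ ν u x) (𝓝[>] a)
      (𝓝 (δ * L + ∫ y in Iio (0 : ℝ), (u (a + y) - u a) ∂ν)) :=
    (tendsto_const_nhds.mul hL).add hIconv
  have hzero : Tendsto (fun x => genBV δ ν u x) (𝓝[>] a) (𝓝 0) := by
    have : ∀ᶠ x in 𝓝[>] a, genBV δ ν u x = (0 : ℝ) := by
      filter_upwards [self_mem_nhdsWithin] with x hx using hharm x hx
    exact Tendsto.congr' (this.mono fun x hx => hx.symm) tendsto_const_nhds
  have hkey : δ * L + (∫ y in Iio (0 : ℝ), (g (a + y) - g a) ∂ν) = 0 := by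
    rw [← hint_eq]
    exact tendsto_nhds_unique hgen hzero
  -- `g'(a) ≤ L` : compare slopes from the right
  have huderivR : HasDerivWithinAt u L (Ici a) a := by
    refine hasDerivWithinAt_Ici_of_tendsto_deriv (s := Ioi a) ?_ ?_ self_mem_nhdsWithin hL
    · exact fun x hx => (hudiff x hx).differentiableWithinAt
    · exact hucont.continuousWithinAt
  have hslope_u : Tendsto (slope u a) (𝓝[>] a) (𝓝 L) := by
    have h1 : HasDerivWithinAt u L (Ioi a) a := huderivR.mono Ioi_subset_Ici_self
    have := hasDerivWithinAt_iff_tendsto_slope.mp h1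
    simpa [diff_singleton_eq_self (notMem_Ioi_self)] using this
  have hslope_g : Tendsto (slope g a) (𝓝[>] a) (𝓝 (deriv g a)) := by
    have := hasDerivAt_iff_tendsto_slope.mp hgdiff.hasDerivAt
    exact this.mono_left (nhdsWithin_mono a fun x hx => ne_of_gt hx)
  have hle : deriv g a ≤ L := by
    refine le_of_tendsto_of_tendsto hslope_g hslope_u ?_
    filter_upwards [self_mem_nhdsWithin] with x hx
    have hxa : (0 : ℝ) < x - a := sub_pos.mpr hx
    simp only [slope_def_field]
    rw [div_le_div_iff_of_pos_right hxa]
    have := hmaj x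
    rw [hua]
    linarith
  -- conclude
  have : genBV δ ν g a = δ * (deriv g a - L) := by
    simp only [genBV]
    linarith [hkey]
  rw [this]
  have : deriv g a - L ≤ 0 := by linarith
  nlinarith
end

section
/- Superharmonicity of the reward at a tangency point of a harmonic majorant from above (claim proved in the Appendix: ℒg(b′) ≤ 0 at the right boundary). Let q ≥ 0 and b ∈ ℝ. Let u, g : ℝ → ℝ be Borel measurable, each differentiable on a neighborhood of b with derivative differentiable at b, and such that y ↦ u(b+y) − u(b) and y ↦ g(b+y) − g(b) are Π-integrable on (−∞,0). Assume u(x) ≥ g(x) for all x ∈ ℝ, u(b) = g(b), u′(b) = g′(b), and ℒu(b) − q·u(b) = 0. Then ℒg(b) − q·g(b) ≤ 0. -/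
open MeasureTheory Set Filter Topology

/-- Superharmonicity of the reward at a tangency point of a harmonic majorant
from above: if `u ≥ g` everywhere, `u(b) = g(b)`, `u'(b) = g'(b)` and
`(ℒ - q)u(b) = 0`, then `(ℒ - q)g(b) ≤ 0`. -/
theorem stmt10
    (δ σ : ℝ) (hσ : 0 ≤ σ)
    (ν : Measure ℝ) (hν0 : ν ≠ 0) (hνsupp : ν (Ici (0 : ℝ)) = 0)
    (hνint : IntegrableOn (fun y => min 1 |y|) (Iio (0 : ℝ)) ν)
    (q : ℝ) (hq : 0 ≤ q) (b : ℝ) (u g : ℝ → ℝ)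
    (hum : Measurable u) (hgm : Measurable g)
    (hud : ∀ᶠ x in 𝓝 b, DifferentiableAt ℝ u x) (hud' : DifferentiableAt ℝ (deriv u) b)
    (hgd : ∀ᶠ x in 𝓝 b, DifferentiableAt ℝ g x) (hgd' : DifferentiableAt ℝ (deriv g) b)
    (huint : IntegrableOn (fun y => u (b + y) - u b) (Iio (0 : ℝ)) ν)
    (hgint : IntegrableOn (fun y => g (b + y) - g b) (Iio (0 : ℝ)) ν)
    (hmaj : ∀ x, g x ≤ u x)
    (heq : u b = g b) (heq' : deriv u b = deriv g b)
    (hLu : gen δ σ ν u b - q * u b = 0) :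
    gen δ σ ν g b - q * g b ≤ 0 := by
  set w : ℝ → ℝ := fun x => u x - g x with hw
  have hw0 : ∀ x, 0 ≤ w x := fun x => sub_nonneg.2 (hmaj x)
  have hwb : w b = 0 := by simp [hw, heq]
  have hwd : ∀ᶠ x in 𝓝 b, DifferentiableAt ℝ w x :=
    (hud.and hgd).mono fun x ⟨h1, h2⟩ => h1.sub h2
  have hwderiv : ∀ᶠ x in 𝓝 b, deriv w x = deriv u x - deriv g x :=
    (hud.and hgd).mono fun x ⟨h1, h2⟩ => deriv_sub h1 h2
  have hw'b : deriv w b = 0 := by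
    rw [hwderiv.self_of_nhds, heq', sub_self]
  have hwd' : DifferentiableAt ℝ (deriv w) b :=
    (hud'.sub hgd').congr_of_eventuallyEq hwderiv
  have hw''eq : deriv (deriv w) b = deriv (deriv u) b - deriv (deriv g) b := by
    rw [Filter.EventuallyEq.deriv_eq hwderiv, deriv_fun_sub hud' hgd']
  -- second derivative of w at the minimum b is nonnegative
  have hw'' : 0 ≤ deriv (deriv w) b := by
    by_contra hneg
    push_neg at hneg
    have hslope := (hwd'.hasDerivAt).isLittleO
    -- deriv w x < 0 eventually for x in 𝓝[>] b
    have hlt : ∀ᶠ x in 𝓝[>] b, deriv w x < 0 := by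
      have h := (hasDerivAt_iff_tendsto_slope.1 hwd'.hasDerivAt)
      have h2 : ∀ᶠ x in 𝓝[≠] b, slope (deriv w) b x < 0 :=
        h.eventually (eventually_lt_nhds hneg)
      have h3 : 𝓝[>] b ≤ 𝓝[≠] b :=
        nhdsWithin_mono _ fun x hx => ne_of_gt hx
      filter_upwards [h3 h2, self_mem_nhdsWithin] with x hx hxb
      have hxb' : (0 : ℝ) < x - b := sub_pos.2 hxb
      rw [slope_def_field, div_neg_iff] at hx
      rcases hx with ⟨h1, h2⟩ | ⟨h1, h2⟩
      · linarith
      · rw [hw'b, sub_zero] at h1; linarith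
    have hdiff : ∀ᶠ x in 𝓝[>] b, DifferentiableAt ℝ w x :=
      nhdsWithin_le_nhds hwd
    have hS : {x | deriv w x < 0 ∧ DifferentiableAt ℝ w x} ∈ 𝓝[>] b := hlt.and hdiff
    rcases mem_nhdsGT_iff_exists_Ioc_subset.1 hS with ⟨c, hc, hsub⟩
    have hbc : b < c := hc
    have hanti : StrictAntiOn w (Icc b c) := by
      apply strictAntiOn_of_deriv_neg (convex_Icc b c)
      · intro x hx
        rcases eq_or_lt_of_le hx.1 with h | h
        · subst h
          exact hwd.self_of_nhds.continuousAt.continuousWithinAt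
        · exact ((hsub ⟨h, hx.2⟩).2.continuousAt).continuousWithinAt
      · intro x hx
        rw [interior_Icc] at hx
        exact (hsub ⟨hx.1, le_of_lt hx.2⟩).1
    have := hanti ⟨le_refl b, le_of_lt hbc⟩ ⟨le_of_lt hbc, le_refl c⟩ hbc
    rw [hwb] at this
    exact absurd this (not_lt.2 (hw0 c))
  -- integral comparison
  have hint : ∫ y in Iio (0 : ℝ), (g (b + y) - g b) ∂ν ≤
      ∫ y in Iio (0 : ℝ), (u (b + y) - u b) ∂ν := by
    apply setIntegral_mono_on hgint huint measurableSet_Iio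
    intro y _
    have := hmaj (b + y)
    linarith [heq.ge, heq.le]
  have hgen : gen δ σ ν g b ≤ gen δ σ ν u b := by
    unfold gen
    have h2 : deriv (deriv g) b ≤ deriv (deriv u) b := by linarith [hw''eq ▸ hw'']
    have hσ2 : (0:ℝ) ≤ σ ^ 2 / 2 := by positivity
    have := mul_le_mul_of_nonneg_left h2 hσ2
    rw [heq']
    linarith
  calc gen δ σ ν g b - q * g b ≤ gen δ σ ν u b - q * u b := by rw [heq]; linarith
    _ = 0 := hLu
end

section
/- Propagation of nonpositivity for harmonic functions on a half-line (intermediate claim in the proof of Proposition 5.5(II)). Let α ∈ ℝ and let h : ℝ → ℝ be Borel measurable, continuous on [α,∞), differentiable on a neighborhood of every point of (α,∞) with h′ differentiable on (α,∞), and with y ↦ h(x+y) − h(x) Π-integrable for every x > α. Assume ℒh(x) = 0 for all x ∈ (α,∞), h(x) ≥ 0 for all x ≤ α, and h(y) < 0 for some y > α. Then h(x) ≤ 0 for all x ≥ y. -/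
open MeasureTheory Set Filter Topology

/-- Propagation of nonpositivity for harmonic functions on a half-line:
if `ℒh = 0` on `(α,∞)`, `h ≥ 0` on `(-∞,α]`, and `h(y) < 0` for some `y > α`,
then `h ≤ 0` on `[y,∞)`. -/
theorem stmt11
    (δ σ : ℝ) (hσ : 0 ≤ σ)
    (ν : Measure ℝ) (hν0 : ν ≠ 0) (hνsupp : ν (Ici (0 : ℝ)) = 0)
    (hνint : IntegrableOn (fun y => min 1 |y|) (Iio (0 : ℝ)) ν)
    (α : ℝ) (h : ℝ → ℝ)
    (hmeas : Measurable h)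
    (hcont : ContinuousOn h (Ici α))
    (hdiff : ∀ x ∈ Ioi α, ∀ᶠ z in 𝓝 x, DifferentiableAt ℝ h z)
    (hdiff' : ∀ x ∈ Ioi α, DifferentiableAt ℝ (deriv h) x)
    (hint : ∀ x ∈ Ioi α, IntegrableOn (fun y => h (x + y) - h x) (Iio (0 : ℝ)) ν)
    (hharm : ∀ x ∈ Ioi α, gen δ σ ν h x = 0)
    (hnn : ∀ x ≤ α, 0 ≤ h x)
    (y : ℝ) (hy : α < y) (hyneg : h y < 0) :
    ∀ x, y ≤ x → h x ≤ 0 := by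
  intro x hyx
  by_contra hpos
  push_neg at hpos
  have hαx : α < x := lt_of_lt_of_le hy hyx
  have hyIcc : y ∈ Icc α x := ⟨hy.le, hyx⟩
  have contK : ContinuousOn h (Icc α x) := hcont.mono Icc_subset_Ici_self
  obtain ⟨c₀, hc₀K, hc₀min⟩ :=
    isCompact_Icc.exists_isMinOn ⟨y, hyIcc⟩ contK
  set m := h c₀ with hm
  have hm_le : ∀ z ∈ Icc α x, m ≤ h z := fun z hz => hc₀min hz
  have hmneg : m < 0 := lt_of_le_of_lt (hm_le y hyIcc) hyneg
  set S : Set ℝ := Icc α x ∩ h ⁻¹' {m} with hS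
  have Sclosed : IsClosed S :=
    contK.preimage_isClosed_of_isClosed isClosed_Icc isClosed_singleton
  have Sne : S.Nonempty := ⟨c₀, hc₀K, rfl⟩
  have Sbdd : BddBelow S := ⟨α, fun z hz => hz.1.1⟩
  set c : ℝ := sInf S with hc
  have hcS : c ∈ S := Sclosed.csInf_mem Sne Sbdd
  have hcIcc : c ∈ Icc α x := hcS.1
  have hcm : h c = m := hcS.2
  have hαc : α < c := by
    rcases eq_or_lt_of_le hcIcc.1 with e | e
    · exfalso; have := hnn α le_rfl; rw [e, hcm] at this; linarith
    · exact e
  have hcx : c < x := by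
    rcases eq_or_lt_of_le hcIcc.2 with e | e
    · exfalso; rw [← e] at hpos; rw [hcm] at hpos; linarith
    · exact e
  -- strict minimality to the left of c
  have hstrict : ∀ z, z < c → m < h z := by
    intro z hz
    by_cases hzα : z < α
    · have := hnn z hzα.le; linarith
    · push_neg at hzα
      have hzIcc : z ∈ Icc α x := ⟨hzα, hz.le.trans hcIcc.2⟩
      rcases eq_or_lt_of_le (hm_le z hzIcc) with e | e
      · exfalso
        have : z ∈ S := ⟨hzIcc, e.symm⟩
        exact absurd (csInf_le Sbdd this) (not_le.mpr hz)
      · exact e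
  -- c is a minimum on Iio x
  have hminIio : ∀ z < x, h c ≤ h z := by
    intro z hz
    by_cases hzα : z < α
    · have := hnn z hzα.le; rw [hcm]; linarith
    · push_neg at hzα
      rw [hcm]; exact hm_le z ⟨hzα, hz.le⟩
  have localmin : IsLocalMin h c :=
    Filter.eventually_of_mem (Iio_mem_nhds hcx) fun z hz => hminIio z hz
  have hd1 : deriv h c = 0 := localmin.deriv_eq_zero
  -- second derivative nonnegative at c
  have hd2 : 0 ≤ deriv (deriv h) c := by
    by_contra hdneg
    push_neg at hdneg
    have hDA : HasDerivAt (deriv h) (deriv (deriv h) c) c :=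
      (hdiff' c hαc).hasDerivAt
    have hslope : Tendsto (slope (deriv h) c) (𝓝[≠] c) (𝓝 (deriv (deriv h) c)) :=
      hasDerivAt_iff_tendsto_slope.mp hDA
    have ev : ∀ᶠ z in 𝓝[≠] c, slope (deriv h) c z < 0 :=
      hslope.eventually (eventually_lt_nhds hdneg)
    have ev' : ∀ᶠ z in 𝓝[>] c, slope (deriv h) c z < 0 :=
      ev.filter_mono (nhdsWithin_mono c fun z hz => ne_of_gt hz)
    obtain ⟨u, huIoc, hu⟩ :=
      (mem_nhdsGT_iff_exists_mem_Ioc_Ioo_subset hcx).mp ev'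
    have hderivneg : ∀ z ∈ Ioo c u, deriv h z < 0 := by
      intro z hz
      have hs : slope (deriv h) c z < 0 := hu hz
      rw [slope_def_field] at hs
      have hzc : (0:ℝ) < z - c := by linarith [hz.1]
      have : (deriv h z - deriv h c) / (z - c) < 0 := hs
      rw [hd1, sub_zero] at this
      rcases div_neg_iff.mp this with ⟨h1, h2⟩ | ⟨h1, _⟩
      · linarith
      · exact h1
    set w : ℝ := (c + u) / 2 with hw
    have hcw : c < w := by simp only [hw]; linarith [huIoc.1]
    have hwu : w < u := by simp only [hw]; linarith [huIoc.1]
    have hwx : w < x := lt_of_lt_of_le hwu huIoc.2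
    have cont' : ContinuousOn h (Icc c w) := by
      intro z hz
      have hzα : α < z := lt_of_lt_of_le hαc hz.1
      exact ((hdiff z hzα).self_of_nhds).continuousAt.continuousWithinAt
    have anti : StrictAntiOn h (Icc c w) := by
      apply strictAntiOn_of_deriv_neg (convex_Icc c w) cont'
      intro z hz
      rw [interior_Icc] at hz
      exact hderivneg z ⟨hz.1, lt_trans hz.2 hwu⟩
    have : h w < h c := anti ⟨le_rfl, hcw.le⟩ ⟨hcw.le, le_rfl⟩ hcw
    exact absurd (hminIio w hwx) (not_le.mpr this)
  -- the nonlocal term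
  set I : ℝ := ∫ y' in Iio (0 : ℝ), (h (c + y') - h c) ∂ν with hI
  have genc := hharm c hαc
  simp only [gen] at genc
  have Ile : I ≤ 0 := by
    have hσ2 : 0 ≤ σ ^ 2 / 2 := by positivity
    have : I = -(δ * deriv h c + σ ^ 2 / 2 * deriv (deriv h) c) := by
      rw [hI]; linarith [genc]
    rw [this, hd1]
    nlinarith [mul_nonneg hσ2 hd2]
  have aeneg : 0 ≤ᵐ[ν.restrict (Iio (0:ℝ))] fun y' => h (c + y') - h c := by
    refine Filter.eventually_of_mem (self_mem_ae_restrict measurableSet_Iio) ?_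
    intro z hz
    have : c + z < c := by simp only [mem_Iio] at hz; linarith
    have := hstrict (c + z) this
    simp only [Pi.zero_apply, hcm]
    linarith
  have Ige : 0 ≤ I := integral_nonneg_of_ae aeneg
  have Izero : I = 0 := le_antisymm Ile Ige
  have aeeq := (integral_eq_zero_iff_of_nonneg_ae aeneg (hint c hαc)).mp Izero
  have hsub : Iio (0:ℝ) ⊆ {z | ¬ ((fun y' => h (c + y') - h c) z = (0:ℝ→ℝ) z)} := by
    intro z hz
    have hlt : c + z < c := by simp only [mem_Iio] at hz; linarith
    have := hstrict (c + z) hlt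
    simp only [Pi.zero_apply, mem_setOf_eq, hcm]
    intro e; linarith [sub_eq_zero.mp e]
  have hnull : ν.restrict (Iio (0:ℝ)) {z | ¬ ((fun y' => h (c + y') - h c) z = (0:ℝ→ℝ) z)} = 0 :=
    aeeq
  have hIio0 : ν (Iio (0:ℝ)) = 0 := by
    have h1 : ν.restrict (Iio (0:ℝ)) (Iio (0:ℝ)) = ν (Iio (0:ℝ)) :=
      Measure.restrict_apply_self ν _
    have h2 : ν.restrict (Iio (0:ℝ)) (Iio (0:ℝ)) = 0 :=
      measure_mono_null hsub hnull
    rw [← h1, h2]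
  have : ν = 0 := by
    have huniv : ν univ = 0 := by
      have : (univ : Set ℝ) = Iio 0 ∪ Ici 0 := (Iio_union_Ici).symm
      rw [this]
      exact le_antisymm ((measure_union_le _ _).trans (by rw [hIio0, hνsupp]; simp))
        (zero_le ..)
    exact Measure.measure_univ_eq_zero.mp huniv
  exact hν0 this
end
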